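/- arXiv:0808.2747 — 13 statements merged into one kernel-verified Lean document; each statement's English description precedes it below -/
import Mathlib

section
/- Let π be a possibility distribution on a nonempty finite set X and let p be a probability distribution on X. Then p belongs to the credal set 𝒫_π if and only if for every α ∈ (0,1], P({x ∈ X : π(x) > α}) ≥ 1 − α. -/
open Finset
open scoped Classical

variable {X : Type*}

/-- A probability distribution on a finite set `X`. -/
def IsProbDist [Fintype X] (p : X → ℝ) : Prop :=
  (∀ x, 0 ≤ p x) ∧ ∑ x, p x = 1

/-- Maximum of `f` over the finite set `A`, with the maximum over the empty set taken to be 0. -/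
noncomputable def finMax {ι : Type*} (A : Finset ι) (f : ι → ℝ) : ℝ :=
  if h : A.Nonempty then A.sup' h f else 0

/-- A possibility distribution on a finite set `X`. -/
def IsPossDist [Fintype X] (π : X → ℝ) : Prop :=
  (∀ x, 0 ≤ π x ∧ π x ≤ 1) ∧ ∃ x, π x = 1

/-- Necessity measure of a possibility distribution: `N(A) = 1 - max_{x ∈ Aᶜ} π x`. -/
noncomputable def necessity [Fintype X] [DecidableEq X] (π : X → ℝ) (A : Finset X) : ℝ :=
  1 - finMax Aᶜ π

/-- The credal set induced by a possibility distribution. -/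
def credalPoss [Fintype X] [DecidableEq X] (π : X → ℝ) : Set (X → ℝ) :=
  {p | IsProbDist p ∧ ∀ A : Finset X, necessity π A ≤ ∑ x ∈ A, p x}

theorem statement0 [Fintype X] [Nonempty X] [DecidableEq X]
    (π : X → ℝ) (hπ : IsPossDist π) (p : X → ℝ) (hp : IsProbDist p) :
    p ∈ credalPoss π ↔
      ∀ α : ℝ, 0 < α → α ≤ 1 →
        1 - α ≤ ∑ x ∈ Finset.univ.filter (fun x => α < π x), p x := by
  obtain ⟨hπ01, x1, hx1⟩ := hπ
  obtain ⟨hp0, hp1⟩ := hp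
  constructor
  · rintro ⟨-, hN⟩ α hα0 hα1
    refine le_trans ?_ (hN (Finset.univ.filter (fun x => α < π x)))
    unfold necessity finMax
    split_ifs with h
    · have hle : (Finset.univ.filter (fun x => α < π x))ᶜ.sup' h π ≤ α := by
        apply Finset.sup'_le
        intro x hx
        simp only [Finset.mem_compl, Finset.mem_filter, Finset.mem_univ, true_and,
          not_lt] at hx
        exact hx
      linarith
    · linarith
  · intro h
    refine ⟨⟨hp0, hp1⟩, fun A => ?_⟩
    unfold necessity finMax
    split_ifs with hA
    · set α := Aᶜ.sup' hA π with hαdef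
      have hα0 : 0 ≤ α := le_trans (hπ01 hA.choose).1 (Finset.le_sup' π hA.choose_spec)
      have key : ∀ β : ℝ, α ≤ β → 0 < β → β ≤ 1 → 1 - β ≤ ∑ x ∈ A, p x := by
        intro β hβα hβ0 hβ1
        refine le_trans (h β hβ0 hβ1) (Finset.sum_le_sum_of_subset_of_nonneg ?_ ?_)
        · intro x hx
          simp only [Finset.mem_filter, Finset.mem_univ, true_and] at hx
          by_contra hxA
          have : π x ≤ α := Finset.le_sup' π (Finset.mem_compl.mpr hxA)
          linarith
        · intro x _ _; exact hp0 x
      rcases lt_or_ge 1 α with hα1 | hα1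
      · have : 0 ≤ ∑ x ∈ A, p x := Finset.sum_nonneg fun x _ => hp0 x
        linarith
      · rcases eq_or_lt_of_le hα0 with heq | hpos
        · have h1 : (1 : ℝ) ≤ ∑ x ∈ A, p x := by
            refine le_of_forall_pos_le_add fun ε hε => ?_
            have hm0 : 0 < min ε 1 := lt_min hε one_pos
            have := key (min ε 1) (by rw [← heq]; exact le_of_lt hm0) hm0 (min_le_right _ _)
            have : 1 - ε ≤ ∑ x ∈ A, p x := le_trans (by
              have := min_le_left ε 1; linarith) this
            linarith
          linarith
        · have := key α le_rfl hpos hα1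
          linarith
    · have hAuniv : A = Finset.univ := by
        rw [Finset.not_nonempty_iff_eq_empty] at hA
        rwa [Finset.compl_eq_empty_iff] at hA
      rw [hAuniv, hp1]
      norm_num
end

section
/- Let ∅ = A_0 ⊊ A_1 ⊊ … ⊊ A_n = X be strictly nested subsets of a nonempty finite set X and let 0 = β_0 ≤ β_1 ≤ … ≤ β_n = 1 be real numbers. For x ∈ X let i(x) = min{i : x ∈ A_i} and define π̄(x) = β_{i(x)}. Then π̄ is a possibility distribution on X and its credal set satisfies 𝒫_{π̄} = {p : p is a probability distribution on X and P(A_i) ≤ β_i for i = 1,…,n}. -/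
open Finset
open scoped Classical

variable {X : Type*}

/-- The index `i(x) = min {i | x ∈ A i}` of the first nested set containing `x`. -/
noncomputable def idxOf (A : ℕ → Finset X) (x : X) : ℕ := sInf {i | x ∈ A i}

/-- The upper possibility distribution `π̄(x) = β_{i(x)}` of a generalized p-box. -/
noncomputable def piUpper (A : ℕ → Finset X) (β : ℕ → ℝ) (x : X) : ℝ :=
  β (idxOf A x)

/-- The lower possibility distribution
`π̲(x) = 1 − max({0} ∪ {α_j : 0 ≤ j ≤ n, α_j < α_{i(x)}})` of a generalized p-box. -/
noncomputable def piLower (A : ℕ → Finset X) (α : ℕ → ℝ) (n : ℕ) (x : X) : ℝ :=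
  1 - max 0 (finMax ((Finset.range (n + 1)).filter (fun j => α j < α (idxOf A x))) α)

/-- The credal set of a generalized p-box given by nested sets `A i` and bounds `α i ≤ β i`,
`i = 1, …, n`. -/
def credalGPB [Fintype X] (n : ℕ) (A : ℕ → Finset X) (α β : ℕ → ℝ) : Set (X → ℝ) :=
  {p | IsProbDist p ∧ ∀ k, 1 ≤ k → k ≤ n →
    α k ≤ ∑ x ∈ A k, p x ∧ ∑ x ∈ A k, p x ≤ β k}

lemma le_finMax' {ι : Type*} {A : Finset ι} (f : ι → ℝ) {x : ι} (hx : x ∈ A) :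
    f x ≤ finMax A f := by
  rw [finMax, dif_pos ⟨x, hx⟩]; exact Finset.le_sup' f hx

lemma finMax_le' {ι : Type*} {A : Finset ι} {f : ι → ℝ} {c : ℝ} (hc : 0 ≤ c)
    (h : ∀ x ∈ A, f x ≤ c) : finMax A f ≤ c := by
  unfold finMax; split
  · exact Finset.sup'_le _ f h
  · exact hc

lemma Amono' {X : Type*} (n : ℕ) (A : ℕ → Finset X)
    (hAnest : ∀ i, i < n → A i ⊂ A (i + 1))
    {i j : ℕ} (hij : i ≤ j) (hj : j ≤ n) : A i ⊆ A j := by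
  induction j with
  | zero => simp [Nat.le_zero.mp hij]
  | succ k ih =>
    rcases Nat.lt_or_ge i (k + 1) with h | h
    · exact (ih (Nat.lt_succ_iff.mp h) (Nat.le_of_succ_le hj)).trans
        (hAnest k (Nat.lt_of_succ_le hj)).subset
    · have : i = k + 1 := le_antisymm hij h
      simp [this]

theorem statement1 [Fintype X] [Nonempty X] [DecidableEq X]
    (n : ℕ) (A : ℕ → Finset X) (β : ℕ → ℝ)
    (hA0 : A 0 = ∅) (hAn : A n = Finset.univ)
    (hAnest : ∀ i, i < n → A i ⊂ A (i + 1))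
    (hβ0 : β 0 = 0) (hβn : β n = 1)
    (hβmono : ∀ i j, i ≤ j → j ≤ n → β i ≤ β j) :
    IsPossDist (piUpper A β) ∧
      ∀ p : X → ℝ,
        p ∈ credalPoss (piUpper A β) ↔
          (IsProbDist p ∧ ∀ i, 1 ≤ i → i ≤ n → ∑ x ∈ A i, p x ≤ β i) := by
  have hn : 1 ≤ n := by
    by_contra h
    have hn0 : n = 0 := by omega
    obtain ⟨x⟩ := ‹Nonempty X›
    have : x ∈ A 0 := by rw [hn0] at hAn; rw [hAn]; exact Finset.mem_univ x
    simp [hA0] at this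
  -- basic facts about idxOf
  have hmemn : ∀ x : X, x ∈ A n := fun x => by rw [hAn]; exact Finset.mem_univ x
  have hne : ∀ x : X, {i | x ∈ A i}.Nonempty := fun x => ⟨n, hmemn x⟩
  have hidx_mem : ∀ x : X, x ∈ A (idxOf A x) := fun x => Nat.sInf_mem (hne x)
  have hidx_le : ∀ (x : X) (i : ℕ), x ∈ A i → idxOf A x ≤ i :=
    fun x i hi => Nat.sInf_le hi
  have hidx_len : ∀ x : X, idxOf A x ≤ n := fun x => hidx_le x n (hmemn x)
  have hidx_pos : ∀ x : X, 1 ≤ idxOf A x := by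
    intro x
    rcases Nat.eq_zero_or_pos (idxOf A x) with h0 | h
    · have := hidx_mem x; rw [h0, hA0] at this; simp at this
    · exact h
  have hpi_nonneg : ∀ x : X, 0 ≤ piUpper A β x := fun x => by
    have := hβmono 0 (idxOf A x) (Nat.zero_le _) (hidx_len x)
    rw [hβ0] at this; exact this
  have hpi_le_one : ∀ x : X, piUpper A β x ≤ 1 := fun x => by
    have := hβmono (idxOf A x) n (hidx_len x) le_rfl
    rw [hβn] at this; exact this
  constructor
  · refine ⟨fun x => ⟨hpi_nonneg x, hpi_le_one x⟩, ?_⟩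
    -- pick x ∈ A n \ A (n - 1)
    have hsub : A (n - 1) ⊂ A n := by
      have := hAnest (n - 1) (by omega)
      have h' : n - 1 + 1 = n := by omega
      rwa [h'] at this
    obtain ⟨x, hxn, hxn1⟩ := Finset.exists_of_ssubset hsub
    refine ⟨x, ?_⟩
    have hidx : idxOf A x = n := by
      have hle := hidx_le x n hxn
      rcases lt_or_eq_of_le hle with hlt | heq
      · exact absurd (Amono' n A hAnest (by omega : idxOf A x ≤ n - 1) (by omega)
          (hidx_mem x)) hxn1
      · exact heq
    rw [piUpper, hidx, hβn]
  · intro p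
    constructor
    · rintro ⟨hp, hcred⟩
      refine ⟨hp, fun i hi1 hin => ?_⟩
      have key := hcred (A i)ᶜ
      rw [necessity, compl_compl] at key
      have hsum : ∑ x ∈ (A i)ᶜ, p x = 1 - ∑ x ∈ A i, p x := by
        have := Finset.sum_add_sum_compl (A i) p
        rw [hp.2] at this; linarith
      rw [hsum] at key
      have hfm : finMax (A i) (piUpper A β) ≤ β i := by
        refine finMax_le' ?_ ?_
        · have := hβmono 0 i (Nat.zero_le _) hin; rw [hβ0] at this; exact this
        · intro x hx
          exact hβmono _ i (hidx_le x i hx) hin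
      linarith
    · rintro ⟨hp, hbound⟩
      refine ⟨hp, fun B => ?_⟩
      rw [necessity]
      have hsum : ∑ x ∈ Bᶜ, p x = 1 - ∑ x ∈ B, p x := by
        have := Finset.sum_add_sum_compl B p
        rw [hp.2] at this; linarith
      have key : ∑ x ∈ Bᶜ, p x ≤ finMax Bᶜ (piUpper A β) := by
        rcases Finset.eq_empty_or_nonempty Bᶜ with hB | hB
        · simp [hB, finMax]
        · obtain ⟨x0, hx0, hmax⟩ := Finset.exists_max_image Bᶜ (idxOf A) hB
          set m := idxOf A x0 with hm
          have hsubset : Bᶜ ⊆ A m := fun x hx =>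
            Amono' n A hAnest (hmax x hx) (hidx_len x0) (hidx_mem x)
          have h1 : ∑ x ∈ Bᶜ, p x ≤ ∑ x ∈ A m, p x :=
            Finset.sum_le_sum_of_subset_of_nonneg hsubset (fun x _ _ => hp.1 x)
          have h2 : ∑ x ∈ A m, p x ≤ β m := hbound m (hidx_pos x0) (hidx_len x0)
          have h3 : β m ≤ finMax Bᶜ (piUpper A β) := le_finMax' (piUpper A β) hx0
          linarith
      linarith
end

section
/- For every generalized p-box on a nonempty finite set X, with credal set 𝒫, there exists a mass assignment m on X whose belief function Bel satisfies 𝒫_Bel = 𝒫. -/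
open Finset
open scoped Classical

variable {X : Type*}

/-- A mass assignment (random set) on the finite set `X`. -/
def IsMass [Fintype X] [DecidableEq X] (m : Finset X → ℝ) : Prop :=
  (∀ E, 0 ≤ m E) ∧ m ∅ = 0 ∧ ∑ E : Finset X, m E = 1

/-- The belief function of a mass assignment: `Bel(B) = ∑_{E ⊆ B} m(E)`. -/
noncomputable def bel [Fintype X] [DecidableEq X] (m : Finset X → ℝ) (B : Finset X) : ℝ :=
  ∑ E ∈ Finset.univ.filter (fun E => E ⊆ B), m E

/-- The credal set induced by the belief function of a mass assignment. -/
def credalBel [Fintype X] [DecidableEq X] (m : Finset X → ℝ) : Set (X → ℝ) :=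
  {p | IsProbDist p ∧ ∀ B : Finset X, bel m B ≤ ∑ x ∈ B, p x}


lemma clamp_diff (L M u v : ℝ) (huv : u ≤ v) :
    min M (max L v) - min M (max L u) = max 0 (min M v - max L u) := by
  simp only [min_def, max_def]; split_ifs <;> linarith

lemma sum_clamp (f : ℕ → ℝ) (L M : ℝ) (n : ℕ) (hf : ∀ b, b < n → f b ≤ f (b+1)) :
    ∑ b ∈ Finset.range n, max 0 (min M (f (b+1)) - max L (f b))
      = min M (max L (f n)) - min M (max L (f 0)) := by
  rw [← Finset.sum_range_sub (fun b => min M (max L (f b)))]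
  exact Finset.sum_congr rfl fun b hb => (clamp_diff _ _ _ _ (hf b (mem_range.mp hb))).symm

lemma chain_subset (A : ℕ → Finset X) (n : ℕ) (h : ∀ i, i < n → A i ⊂ A (i + 1)) :
    ∀ i j, i ≤ j → j ≤ n → A i ⊆ A j := by
  intro i j hij hjn
  induction j with
  | zero => simp [Nat.le_zero.mp hij]
  | succ k ih =>
    rcases Nat.lt_or_ge i (k+1) with hlt | hge
    · exact (ih (Nat.lt_succ_iff.mp hlt) (le_trans (Nat.le_succ k) hjn)).trans
        (h k (Nat.lt_of_succ_le hjn)).subset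
    · have : i = k + 1 := le_antisymm hij hge
      subst this; exact Finset.Subset.refl _

lemma chain_ssubset (A : ℕ → Finset X) (n : ℕ) (h : ∀ i, i < n → A i ⊂ A (i + 1)) :
    ∀ i j, i < j → j ≤ n → A i ⊂ A j := by
  intro i j hij hjn
  obtain ⟨k, rfl⟩ : ∃ k, j = k + 1 := ⟨j - 1, by omega⟩
  exact lt_of_le_of_lt (chain_subset A n h i k (by omega) (by omega)) (h k (by omega))

noncomputable def gw (α β : ℕ → ℝ) (a b : ℕ) : ℝ :=
  max 0 (min (α (a+1)) (β (b+1)) - max (α a) (β b))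

def gF [DecidableEq X] (A : ℕ → Finset X) (a b : ℕ) : Finset X := A (a+1) \ A b

noncomputable def gm [Fintype X] [DecidableEq X] (n : ℕ) (A : ℕ → Finset X) (α β : ℕ → ℝ)
    (E : Finset X) : ℝ :=
  ∑ q ∈ Finset.range n ×ˢ Finset.range n, if gF A q.1 q.2 = E then gw α β q.1 q.2 else 0

lemma gw_nonneg (α β : ℕ → ℝ) (a b : ℕ) : 0 ≤ gw α β a b := le_max_left _ _

lemma gm_nonneg [Fintype X] [DecidableEq X] (n : ℕ) (A : ℕ → Finset X) (α β : ℕ → ℝ)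
    (E : Finset X) : 0 ≤ gm n A α β E :=
  Finset.sum_nonneg fun q _ => by
    by_cases h : gF A q.1 q.2 = E <;> simp [h, gw_nonneg]

lemma bel_gm [Fintype X] [DecidableEq X] (n : ℕ) (A : ℕ → Finset X) (α β : ℕ → ℝ)
    (B : Finset X) :
    bel (gm n A α β) B
      = ∑ q ∈ (Finset.range n ×ˢ Finset.range n).filter (fun q => gF A q.1 q.2 ⊆ B),
          gw α β q.1 q.2 := by
  unfold bel gm
  rw [Finset.sum_comm, Finset.sum_filter]
  refine Finset.sum_congr rfl fun q _ => ?_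
  rw [Finset.sum_ite_eq (Finset.univ.filter (fun E => E ⊆ B)) (gF A q.1 q.2)
    (fun _ => gw α β q.1 q.2)]
  simp


lemma gw_comm (α β : ℕ → ℝ) (a b : ℕ) :
    gw α β a b = max 0 (min (β (b+1)) (α (a+1)) - max (β b) (α a)) := by
  rw [gw, min_comm, max_comm (α a)]

lemma gw_row_sum (α β : ℕ → ℝ) (n a : ℕ) (hb : ∀ b, b < n → β b ≤ β (b+1))
    (hβn : β n = 1) (hβ0 : β 0 = 0) (h0a : 0 ≤ α a) (ha1 : α (a+1) ≤ 1)
    (haa : α a ≤ α (a+1)) :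
    ∑ b ∈ Finset.range n, gw α β a b = α (a+1) - α a := by
  unfold gw
  rw [sum_clamp β (α a) (α (a+1)) n hb, hβn, hβ0,
    max_eq_right (le_trans haa ha1), min_eq_left ha1, max_eq_left h0a, min_eq_right haa]

lemma gw_col_sum (α β : ℕ → ℝ) (n b : ℕ) (ha : ∀ a, a < n → α a ≤ α (a+1))
    (hαn : α n = 1) (hα0 : α 0 = 0) (h0b : 0 ≤ β b) (hb1 : β (b+1) ≤ 1)
    (hbb : β b ≤ β (b+1)) :
    ∑ a ∈ Finset.range n, gw α β a b = β (b+1) - β b := by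
  simp only [gw_comm]
  rw [sum_clamp α (β b) (β (b+1)) n ha, hαn, hα0,
    max_eq_right (le_trans hbb hb1), min_eq_left hb1, max_eq_left h0b, min_eq_right hbb]


lemma max0_sub_min (M L : ℝ) : M - min M L = max 0 (M - L) := by
  rcases le_total L M with h | h
  · rw [min_eq_right h, max_eq_right (by linarith)]
  · rw [min_eq_left h, max_eq_left (by linarith)]; ring

lemma tele_Icc (g : ℕ → ℝ) (c d : ℕ) (hcd : c ≤ d) :
    ∑ t ∈ Finset.Icc (c+1) d, (g t - g (t-1)) = g d - g c := by
  induction d with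
  | zero =>
    have : c = 0 := Nat.le_zero.mp hcd
    subst this; simp
  | succ d ih =>
    rcases Nat.lt_or_ge c (d+1) with h | h
    · rw [Finset.sum_Icc_succ_top (by omega : c + 1 ≤ d + 1)]
      have := ih (by omega)
      simp only [Nat.add_sub_cancel]
      rw [this]; ring
    · have : c = d + 1 := by omega
      subst this; simp

theorem statement4 [Fintype X] [Nonempty X] [DecidableEq X]
    (n : ℕ) (A : ℕ → Finset X) (α β : ℕ → ℝ)
    (hA0 : A 0 = ∅) (hAn : A n = Finset.univ)
    (hAnest : ∀ i, i < n → A i ⊂ A (i + 1))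
    (hα0 : α 0 = 0) (hαn : α n = 1)
    (hαmono : ∀ i j, i ≤ j → j ≤ n → α i ≤ α j)
    (hβ0 : β 0 = 0) (hβn : β n = 1)
    (hβmono : ∀ i j, i ≤ j → j ≤ n → β i ≤ β j)
    (hαβ : ∀ i, i ≤ n → α i ≤ β i) :
    ∃ m : Finset X → ℝ, IsMass m ∧ credalBel m = credalGPB n A α β := by
  classical
  obtain ⟨x0⟩ := (inferInstance : Nonempty X)
  have hn : 1 ≤ n := by
    by_contra hc
    have h0 : n = 0 := by omega
    have : (Finset.univ : Finset X) = ∅ := by rw [← hAn, h0, hA0]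
    exact absurd (this ▸ Finset.mem_univ x0) (by simp [this])
  have hαstep : ∀ a, a < n → α a ≤ α (a+1) := fun a h => hαmono a (a+1) (Nat.le_succ a) h
  have hβstep : ∀ b, b < n → β b ≤ β (b+1) := fun b h => hβmono b (b+1) (Nat.le_succ b) h
  have hα01 : ∀ i, i ≤ n → 0 ≤ α i ∧ α i ≤ 1 := fun i hi =>
    ⟨hα0 ▸ hαmono 0 i (Nat.zero_le i) hi, hαn ▸ hαmono i n hi le_rfl⟩
  have hβ01 : ∀ i, i ≤ n → 0 ≤ β i ∧ β i ≤ 1 := fun i hi =>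
    ⟨hβ0 ▸ hβmono 0 i (Nat.zero_le i) hi, hβn ▸ hβmono i n hi le_rfl⟩
  have hempty : gm n A α β ∅ = 0 := by
    unfold gm
    refine Finset.sum_eq_zero fun q hq => ?_
    rw [Finset.mem_product, Finset.mem_range, Finset.mem_range] at hq
    by_cases h : gF A q.1 q.2 = ∅
    · simp only [h, if_true]
      have hsub : A (q.1+1) ⊆ A q.2 := Finset.sdiff_eq_empty_iff_subset.mp h
      have hba : q.1 + 1 ≤ q.2 := by
        by_contra hc
        exact (chain_ssubset A n hAnest q.2 (q.1+1) (by omega) (by omega)).not_subset hsub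
      have h1 : α (q.1+1) ≤ β q.2 := le_trans (hαβ _ (by omega)) (hβmono _ _ hba (by omega))
      have h2 := min_le_left (α (q.1+1)) (β (q.2+1))
      have h3 := le_max_right (α q.1) (β q.2)
      rw [gw]
      exact max_eq_left (by linarith)
    · simp [h]
  have hrow : ∀ a ∈ Finset.range n, ∑ b ∈ Finset.range n, gw α β a b = α (a+1) - α a := by
    intro a ha
    rw [Finset.mem_range] at ha
    exact gw_row_sum α β n a hβstep hβn hβ0 (hα01 a (by omega)).1 (hα01 (a+1) (by omega)).2
      (hαstep a ha)
  have hcol : ∀ b ∈ Finset.range n, ∑ a ∈ Finset.range n, gw α β a b = β (b+1) - β b := by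
    intro b hb
    rw [Finset.mem_range] at hb
    exact gw_col_sum α β n b hαstep hαn hα0 (hβ01 b (by omega)).1 (hβ01 (b+1) (by omega)).2
      (hβstep b hb)
  have htotal : ∑ E : Finset X, gm n A α β E = 1 := by
    unfold gm
    rw [Finset.sum_comm]
    have h1 : ∀ q ∈ Finset.range n ×ˢ Finset.range n,
        (∑ E : Finset X, if gF A q.1 q.2 = E then gw α β q.1 q.2 else 0) = gw α β q.1 q.2 := by
      intro q _
      rw [Finset.sum_ite_eq Finset.univ (gF A q.1 q.2) (fun _ => gw α β q.1 q.2)]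
      simp
    rw [Finset.sum_congr rfl h1, Finset.sum_product, Finset.sum_congr rfl hrow,
      Finset.sum_range_sub α, hαn, hα0]
    ring
  refine ⟨gm n A α β, ⟨gm_nonneg n A α β, hempty, htotal⟩, ?_⟩
  apply Set.eq_of_subset_of_subset
  · -- credalBel ⊆ credalGPB
    rintro p ⟨hp, hdom⟩
    refine ⟨hp, fun k hk1 hkn => ⟨?_, ?_⟩⟩
    · -- α k ≤ P (A k)
      refine le_trans ?_ (hdom (A k))
      rw [bel_gm]
      have hsub : Finset.range k ×ˢ Finset.range n ⊆
          (Finset.range n ×ˢ Finset.range n).filter (fun q => gF A q.1 q.2 ⊆ A k) := by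
        intro q hq
        rw [Finset.mem_product, Finset.mem_range, Finset.mem_range] at hq
        rw [Finset.mem_filter, Finset.mem_product, Finset.mem_range, Finset.mem_range]
        refine ⟨⟨by omega, hq.2⟩, ?_⟩
        exact le_trans (Finset.sdiff_subset) (chain_subset A n hAnest (q.1+1) k (by omega) hkn)
      have hval : ∑ q ∈ Finset.range k ×ˢ Finset.range n, gw α β q.1 q.2 = α k := by
        rw [Finset.sum_product]
        have : ∀ a ∈ Finset.range k, ∑ b ∈ Finset.range n, gw α β a b = α (a+1) - α a :=
          fun a ha => hrow a (Finset.mem_range.mpr (lt_of_lt_of_le (Finset.mem_range.mp ha) hkn))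
        rw [Finset.sum_congr rfl this, Finset.sum_range_sub α, hα0]
        ring
      calc α k = ∑ q ∈ Finset.range k ×ˢ Finset.range n, gw α β q.1 q.2 := hval.symm
        _ ≤ _ := Finset.sum_le_sum_of_subset_of_nonneg hsub (fun q _ _ => gw_nonneg α β q.1 q.2)
    · -- P (A k) ≤ β k
      have hcompl := hdom (A k)ᶜ
      rw [bel_gm] at hcompl
      have hsub : Finset.range n ×ˢ Finset.Ico k n ⊆
          (Finset.range n ×ˢ Finset.range n).filter (fun q => gF A q.1 q.2 ⊆ (A k)ᶜ) := by
        intro q hq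
        rw [Finset.mem_product, Finset.mem_range, Finset.mem_Ico] at hq
        rw [Finset.mem_filter, Finset.mem_product, Finset.mem_range, Finset.mem_range]
        refine ⟨⟨hq.1, hq.2.2⟩, ?_⟩
        intro x hx
        rw [gF, Finset.mem_sdiff] at hx
        rw [Finset.mem_compl]
        exact fun hxk => hx.2 (chain_subset A n hAnest k q.2 hq.2.1 (by omega) hxk)
      have hval : ∑ q ∈ Finset.range n ×ˢ Finset.Ico k n, gw α β q.1 q.2 = 1 - β k := by
        rw [Finset.sum_product']
        rw [Finset.sum_comm]
        have : ∀ b ∈ Finset.Ico k n, ∑ a ∈ Finset.range n, gw α β a b = β (b+1) - β b := by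
          intro b hb
          rw [Finset.mem_Ico] at hb
          exact hcol b (Finset.mem_range.mpr hb.2)
        rw [Finset.sum_congr rfl this,
          Finset.sum_Ico_eq_sub (fun b => β (b+1) - β b) hkn,
          Finset.sum_range_sub β, Finset.sum_range_sub β, hβn, hβ0]
        ring
      have h1 : 1 - β k ≤ ∑ x ∈ (A k)ᶜ, p x := by
        refine le_trans ?_ hcompl
        rw [← hval]
        exact Finset.sum_le_sum_of_subset_of_nonneg hsub (fun q _ _ => gw_nonneg α β q.1 q.2)
      have h2 : ∑ x ∈ (A k)ᶜ, p x + ∑ x ∈ A k, p x = 1 := by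
        rw [Finset.sum_compl_add_sum, hp.2]
      linarith
  · -- credalGPB ⊆ credalBel
    rintro p ⟨hp, hcon⟩
    refine ⟨hp, fun B => ?_⟩
    rw [bel_gm]
    have hPA : ∀ t : ℕ, (∑ x ∈ A t, p x) = ∑ x ∈ A t, p x := fun t => rfl
    set PA : ℕ → ℝ := fun t => ∑ x ∈ A t, p x with hPAdef
    set S : Finset (ℕ × ℕ) := ((Finset.range n ×ˢ Finset.range n).filter
      (fun q => gF A q.1 q.2 ⊆ B)).filter (fun q => 0 < gw α β q.1 q.2) with hSdef
    have hsum_S : ∑ q ∈ (Finset.range n ×ˢ Finset.range n).filter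
        (fun q => gF A q.1 q.2 ⊆ B), gw α β q.1 q.2 = ∑ q ∈ S, gw α β q.1 q.2 := by
      rw [hSdef]
      refine (Finset.sum_subset (Finset.filter_subset _ _) fun q hq hnq => ?_).symm
      rcases eq_or_lt_of_le (gw_nonneg α β q.1 q.2) with h | h
      · exact h.symm
      · exact absurd (Finset.mem_filter.mpr ⟨hq, h⟩) hnq
    rw [hsum_S]
    have hSmem : ∀ q ∈ S, q.1 < n ∧ q.2 < n ∧ gF A q.1 q.2 ⊆ B ∧
        β q.2 < α (q.1+1) ∧ q.2 ≤ q.1 := by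
      intro q hq
      rw [hSdef, Finset.mem_filter, Finset.mem_filter, Finset.mem_product,
        Finset.mem_range, Finset.mem_range] at hq
      obtain ⟨⟨⟨h1, h2⟩, h3⟩, h4⟩ := hq
      have h4' : 0 < min (α (q.1+1)) (β (q.2+1)) - max (α q.1) (β q.2) := by
        by_contra hc
        push_neg at hc
        rw [gw, max_eq_left hc] at h4
        exact lt_irrefl _ h4
      have h5 : β q.2 < α (q.1+1) := by
        have := min_le_left (α (q.1+1)) (β (q.2+1))
        have := le_max_right (α q.1) (β q.2)
        linarith
      refine ⟨h1, h2, h3, h5, ?_⟩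
      by_contra hc
      push_neg at hc
      have : α (q.1+1) ≤ β q.2 :=
        le_trans (hαβ (q.1+1) (by omega)) (hβmono (q.1+1) q.2 (by omega) (by omega))
      linarith
    set T : Finset ℕ := S.biUnion (fun q => Finset.Icc (q.2+1) (q.1+1)) with hTdef
    have hTmem : ∀ u ∈ T, 1 ≤ u ∧ u ≤ n := by
      intro u hu
      rw [hTdef, Finset.mem_biUnion] at hu
      obtain ⟨q, hq, hu⟩ := hu
      rw [Finset.mem_Icc] at hu
      have := hSmem q hq
      omega
    have hiT : ∀ q ∈ S, q.1 + 1 ∈ T := by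
      intro q hq
      rw [hTdef, Finset.mem_biUnion]
      exact ⟨q, hq, Finset.mem_Icc.mpr ⟨by have := hSmem q hq; omega, le_rfl⟩⟩
    have hDB : ∀ t ∈ T, A t \ A (t-1) ⊆ B := by
      intro t ht
      rw [hTdef, Finset.mem_biUnion] at ht
      obtain ⟨q, hq, ht⟩ := ht
      rw [Finset.mem_Icc] at ht
      obtain ⟨hq1, hq2, hqB, -, -⟩ := hSmem q hq
      intro x hx
      rw [Finset.mem_sdiff] at hx
      refine hqB ?_
      rw [gF, Finset.mem_sdiff]
      exact ⟨chain_subset A n hAnest t (q.1+1) ht.2 (by omega) hx.1,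
        fun hc => hx.2 (chain_subset A n hAnest q.2 (t-1) (by omega) (by omega) hc)⟩
    have h0T : (0:ℕ) ∉ T := fun hc => by have := hTmem 0 hc; omega
    set cc : ℕ → ℕ := fun t => Nat.findGreatest (fun c => c ∉ T) t with hccdef
    have hddex : ∀ t : ℕ, ∃ d, t ≤ d ∧ (d+1) ∉ T := by
      intro t
      refine ⟨max t n, le_max_left _ _, fun hc => ?_⟩
      have := hTmem _ hc
      omega
    set dd : ℕ → ℕ := fun t => Nat.find (hddex t) with hdddef
    have hcc_notmem : ∀ t, cc t ∉ T := by
      intro t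
      simp only [hccdef]
      exact Nat.findGreatest_spec (P := fun c => c ∉ T) (Nat.zero_le t) h0T
    have hcc_le : ∀ t, cc t ≤ t := by
      intro t
      simp only [hccdef]
      exact Nat.findGreatest_le t
    have hcc_lt : ∀ t ∈ T, cc t < t := by
      intro t ht
      rcases eq_or_lt_of_le (hcc_le t) with h | h
      · rw [← h] at ht
        exact absurd ht (hcc_notmem t)
      · exact h
    have hcc_max : ∀ t u, cc t < u → u ≤ t → u ∈ T := by
      intro t u h1 h2
      by_contra hc
      simp only [hccdef] at h1
      exact Nat.findGreatest_is_greatest h1 h2 hc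
    have hcc_ge : ∀ t u, u ≤ t → u ∉ T → u ≤ cc t := by
      intro t u h1 h2
      simp only [hccdef]
      exact Nat.le_findGreatest h1 h2
    have hcc_mono : ∀ t u, t ≤ u → cc t ≤ cc u := by
      intro t u h
      exact hcc_ge u (cc t) (le_trans (hcc_le t) h) (hcc_notmem t)
    have hdd_spec : ∀ t, t ≤ dd t ∧ (dd t + 1) ∉ T := by
      intro t
      simp only [hdddef]
      exact Nat.find_spec (hddex t)
    have hdd_min : ∀ t d, t ≤ d → (d+1) ∉ T → dd t ≤ d := by
      intro t d h1 h2
      simp only [hdddef]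
      exact Nat.find_le ⟨h1, h2⟩
    have hdd_le : ∀ t, t ≤ n → dd t ≤ n := by
      intro t ht
      refine hdd_min t n ht (fun hc => ?_)
      have := hTmem _ hc
      omega
    have hdd_mem : ∀ t ∈ T, ∀ u, t ≤ u → u ≤ dd t → u ∈ T := by
      intro t ht u h1 h2
      rcases eq_or_lt_of_le h1 with h | h
      · exact h ▸ ht
      · by_contra hc
        have hlt : u - 1 < dd t := by omega
        simp only [hdddef] at hlt
        have hmin := Nat.find_min (hddex t) hlt
        push_neg at hmin
        have := hmin (by omega)
        rw [Nat.sub_add_cancel (by omega : 1 ≤ u)] at this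
        exact hc this
    have hIccT : ∀ t ∈ T, ∀ u, cc t < u → u ≤ dd t → u ∈ T := by
      intro t ht u h1 h2
      rcases le_or_gt u t with h | h
      · exact hcc_max t u h1 h
      · exact hdd_mem t ht u (by omega) h2
    have hconst : ∀ t ∈ T, ∀ u ∈ T, cc t < u → u ≤ dd t → cc u = cc t ∧ dd u = dd t := by
      intro t ht u hu h1 h2
      constructor
      · rcases le_or_gt u t with h | h
        · exact le_antisymm (hcc_mono u t h) (hcc_ge u (cc t) (by omega) (hcc_notmem t))
        · have hcu_lt : cc u < t := by
            by_contra hc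
            push_neg at hc
            exact hcc_notmem u (hdd_mem t ht (cc u) hc (le_trans (hcc_le u) h2))
          exact le_antisymm (hcc_ge t (cc u) (by omega) (hcc_notmem u)) (hcc_mono t u (by omega))
      · have hd1 : dd u ≤ dd t := hdd_min u (dd t) h2 (hdd_spec t).2
        refine le_antisymm hd1 ?_
        rcases le_or_gt t (dd u) with h | h
        · exact hdd_min t (dd u) h (hdd_spec u).2
        · exfalso
          have h3 := (hdd_spec u).1
          exact (hdd_spec u).2 (hcc_max t (dd u + 1) (by omega) (by omega))
    set comp : ℕ × ℕ → ℕ × ℕ := fun q => (cc (q.1+1), dd (q.1+1)) with hcompdef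
    have hcc_le2 : ∀ q ∈ S, cc (q.1+1) ≤ q.2 := by
      intro q hq
      by_contra hc
      refine hcc_notmem (q.1+1) ?_
      rw [hTdef, Finset.mem_biUnion]
      exact ⟨q, hq, Finset.mem_Icc.mpr ⟨by omega, hcc_le (q.1+1)⟩⟩
    have hfiber : ∀ r ∈ S.image comp,
        ∑ q ∈ S.filter (fun q => comp q = r), gw α β q.1 q.2 ≤ α r.2 - β r.1 := by
      intro r hr
      obtain ⟨q₀, hq₀, rfl⟩ := Finset.mem_image.mp hr
      simp only [hcompdef]
      obtain ⟨hq₀1, hq₀2, -, hq₀4, hq₀5⟩ := hSmem q₀ hq₀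
      have hi₀T : q₀.1 + 1 ∈ T := hiT q₀ hq₀
      have hc_le_n : cc (q₀.1+1) ≤ n := by have := hcc_le (q₀.1+1); omega
      have hd_le_n : dd (q₀.1+1) ≤ n := hdd_le _ (by omega)
      have hβcαd : β (cc (q₀.1+1)) ≤ α (dd (q₀.1+1)) := by
        have h1 : β (cc (q₀.1+1)) ≤ β q₀.2 := hβmono _ _ (hcc_le2 q₀ hq₀) (by omega)
        have h2 : α (q₀.1+1) ≤ α (dd (q₀.1+1)) := hαmono _ _ (hdd_spec _).1 hd_le_n
        linarith
      have hterm : ∀ q ∈ S.filter (fun q => comp q = comp q₀),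
          gw α β q.1 q.2 = max 0 (min (min (α (q.1+1)) (α (dd (q₀.1+1)))) (β (q.2+1))
            - max (max (α q.1) (β (cc (q₀.1+1)))) (β q.2)) := by
        intro q hq
        rw [Finset.mem_filter] at hq
        obtain ⟨hqS, hqr⟩ := hq
        simp only [hcompdef, Prod.mk.injEq] at hqr
        obtain ⟨hqc, hqd⟩ := hqr
        obtain ⟨hq1, hq2, -, -, -⟩ := hSmem q hqS
        have e1 : min (α (q.1+1)) (α (dd (q₀.1+1))) = α (q.1+1) := by
          refine min_eq_left ?_
          rw [← hqd]
          exact hαmono _ _ (hdd_spec _).1 (by rw [hqd]; exact hd_le_n)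
        have e2 : max (max (α q.1) (β (cc (q₀.1+1)))) (β q.2) = max (α q.1) (β q.2) := by
          rw [max_assoc]
          congr 1
          refine max_eq_right ?_
          rw [← hqc]
          exact hβmono _ _ (hcc_le2 q hqS) (by omega)
        rw [gw, e1, e2]
      rw [Finset.sum_congr rfl hterm]
      have hsub2 : S.filter (fun q => comp q = comp q₀) ⊆
          Finset.range n ×ˢ Finset.range n := by
        intro q hq
        rw [Finset.mem_filter] at hq
        obtain ⟨h1, h2, -, -, -⟩ := hSmem q hq.1
        rw [Finset.mem_product, Finset.mem_range, Finset.mem_range]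
        exact ⟨h1, h2⟩
      refine le_trans (Finset.sum_le_sum_of_subset_of_nonneg hsub2
        (fun q _ _ => le_max_left _ _)) ?_
      rw [Finset.sum_product]
      have hinner : ∀ a ∈ Finset.range n,
          (∑ b ∈ Finset.range n, max 0 (min (min (α (a+1)) (α (dd (q₀.1+1)))) (β (b+1))
            - max (max (α a) (β (cc (q₀.1+1)))) (β b)))
          = max 0 (min (α (dd (q₀.1+1))) (α (a+1)) - max (β (cc (q₀.1+1))) (α a)) := by
        intro a ha
        rw [Finset.mem_range] at ha
        rw [sum_clamp β (max (α a) (β (cc (q₀.1+1)))) (min (α (a+1)) (α (dd (q₀.1+1)))) n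
          hβstep, hβn, hβ0]
        have hL1 : max (α a) (β (cc (q₀.1+1))) ≤ 1 :=
          max_le (hα01 a (by omega)).2 (hβ01 _ hc_le_n).2
        have hM1 : min (α (a+1)) (α (dd (q₀.1+1))) ≤ 1 :=
          le_trans (min_le_left _ _) (hα01 (a+1) (by omega)).2
        have hL0 : 0 ≤ max (α a) (β (cc (q₀.1+1))) :=
          le_trans (hα01 a (by omega)).1 (le_max_left _ _)
        rw [max_eq_right hL1, min_eq_left hM1, max_eq_left hL0, max0_sub_min,
          min_comm (α (a+1)), max_comm (α a)]
      rw [Finset.sum_congr rfl hinner,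
        sum_clamp α (β (cc (q₀.1+1))) (α (dd (q₀.1+1))) n hαstep, hαn, hα0,
        max_eq_right (hβ01 _ hc_le_n).2, min_eq_left (hα01 _ hd_le_n).2,
        max_eq_left (hβ01 _ hc_le_n).1, min_eq_right hβcαd]
    have step1 : ∑ q ∈ S, gw α β q.1 q.2 ≤ ∑ r ∈ S.image comp, (α r.2 - β r.1) := by
      rw [← Finset.sum_fiberwise_of_maps_to
        (fun q hq => Finset.mem_image_of_mem comp hq) (fun q => gw α β q.1 q.2)]
      exact Finset.sum_le_sum hfiber
    have hfTnonneg : ∀ t ∈ T, 0 ≤ PA t - PA (t-1) := by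
      intro t ht
      have h := hTmem t ht
      have hsub : A (t-1) ⊆ A t := chain_subset A n hAnest (t-1) t (by omega) h.2
      have := Finset.sum_le_sum_of_subset_of_nonneg hsub (fun x _ _ => hp.1 x)
      simp only [hPAdef]
      linarith
    have hdisj : (↑(S.image comp) : Set (ℕ × ℕ)).PairwiseDisjoint
        (fun r => Finset.Icc (r.1+1) r.2) := by
      intro r hr r' hr' hne
      simp only [Function.onFun]
      rw [Finset.disjoint_left]
      intro u hu hu'
      rw [Finset.mem_Icc] at hu hu'
      obtain ⟨q, hq, rfl⟩ := Finset.mem_image.mp (Finset.mem_coe.mp hr)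
      obtain ⟨q', hq', rfl⟩ := Finset.mem_image.mp (Finset.mem_coe.mp hr')
      simp only [hcompdef] at hu hu' ⊢
      have hiT1 := hiT q hq
      have hiT2 := hiT q' hq'
      have huT : u ∈ T := hIccT _ hiT1 u (by omega) hu.2
      have e1 := hconst _ hiT1 u huT (by omega) hu.2
      have e2 := hconst _ hiT2 u huT (by omega) hu'.2
      refine hne ?_
      simp only [hcompdef, Prod.mk.injEq]
      constructor
      · rw [← e1.1, ← e2.1]
      · rw [← e1.2, ← e2.2]
    have hsubT : ∀ r ∈ S.image comp, Finset.Icc (r.1+1) r.2 ⊆ T := by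
      intro r hr
      obtain ⟨q, hq, rfl⟩ := Finset.mem_image.mp hr
      intro u hu
      simp only [hcompdef] at hu
      rw [Finset.mem_Icc] at hu
      exact hIccT _ (hiT q hq) u (by omega) hu.2
    have hper : ∀ r ∈ S.image comp,
        α r.2 - β r.1 ≤ ∑ t ∈ Finset.Icc (r.1+1) r.2, (PA t - PA (t-1)) := by
      intro r hr
      obtain ⟨q, hq, rfl⟩ := Finset.mem_image.mp hr
      simp only [hcompdef]
      have hin := hiT q hq
      have hci : cc (q.1+1) < q.1 + 1 := hcc_lt _ hin
      have hid : q.1 + 1 ≤ dd (q.1+1) := (hdd_spec _).1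
      have hq1n : q.1 < n := (hSmem q hq).1
      have hd_n : dd (q.1+1) ≤ n := hdd_le _ (by omega)
      rw [tele_Icc PA (cc (q.1+1)) (dd (q.1+1)) (by omega)]
      have hαd : α (dd (q.1+1)) ≤ PA (dd (q.1+1)) := (hcon _ (by omega) hd_n).1
      have hβc : PA (cc (q.1+1)) ≤ β (cc (q.1+1)) := by
        rcases Nat.eq_zero_or_pos (cc (q.1+1)) with h | h
        · rw [h, hβ0]
          simp [hPAdef, hA0]
        · exact (hcon _ h (by have := hcc_le (q.1+1); omega)).2
      linarith
    have step2 : ∑ r ∈ S.image comp, (α r.2 - β r.1) ≤ ∑ t ∈ T, (PA t - PA (t-1)) :=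
      calc ∑ r ∈ S.image comp, (α r.2 - β r.1)
          ≤ ∑ r ∈ S.image comp, ∑ t ∈ Finset.Icc (r.1+1) r.2, (PA t - PA (t-1)) :=
            Finset.sum_le_sum hper
        _ = ∑ t ∈ (S.image comp).biUnion (fun r => Finset.Icc (r.1+1) r.2),
              (PA t - PA (t-1)) := (Finset.sum_biUnion hdisj).symm
        _ ≤ ∑ t ∈ T, (PA t - PA (t-1)) := by
            refine Finset.sum_le_sum_of_subset_of_nonneg ?_
              (fun t ht _ => hfTnonneg t ht)
            intro t ht
            rw [Finset.mem_biUnion] at ht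
            obtain ⟨r, hr, ht⟩ := ht
            exact hsubT r hr ht
    have step3 : ∑ t ∈ T, (PA t - PA (t-1)) ≤ ∑ x ∈ B, p x := by
      have hTd : (↑T : Set ℕ).PairwiseDisjoint (fun t => A t \ A (t-1)) := by
        intro t ht t' ht' hne
        simp only [Function.onFun]
        rw [Finset.disjoint_left]
        intro x hx hx'
        rw [Finset.mem_sdiff] at hx hx'
        have h1 := hTmem t (Finset.mem_coe.mp ht)
        have h2 := hTmem t' (Finset.mem_coe.mp ht')
        rcases Nat.lt_or_ge t t' with h | h
        · exact hx'.2 (chain_subset A n hAnest t (t'-1) (by omega) (by omega) hx.1)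
        · have h' : t' < t := by omega
          exact hx.2 (chain_subset A n hAnest t' (t-1) (by omega) (by omega) hx'.1)
      have heq : ∀ t ∈ T, PA t - PA (t-1) = ∑ x ∈ A t \ A (t-1), p x := by
        intro t ht
        have h := hTmem t ht
        rw [Finset.sum_sdiff_eq_sub (chain_subset A n hAnest (t-1) t (by omega) h.2)]
      rw [Finset.sum_congr rfl heq, ← Finset.sum_biUnion hTd]
      refine Finset.sum_le_sum_of_subset_of_nonneg ?_ (fun x _ _ => hp.1 x)
      intro x hx
      rw [Finset.mem_biUnion] at hx
      obtain ⟨t, ht, hx⟩ := hx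
      exact hDB t ht hx
    linarith [step1, step2, step3]
end

section
/- Let a generalized p-box on a nonempty finite set X be given by strictly nested sets ∅ = A_0 ⊊ A_1 ⊊ … ⊊ A_n = X with bounds α_i, β_i, credal set 𝒫, and G_k = A_k ∖ A_{k−1}. Then 𝒫 is nonempty and, for all indices 1 ≤ i ≤ j ≤ n, the minimum of P(⋃_{k=i}^{j} G_k) over all probability distributions p ∈ 𝒫 equals max(0, α_j − β_{i−1}). -/
open Finset
open scoped Classical

variable {X : Type*}

theorem statement5 [Fintype X] [Nonempty X] [DecidableEq X]
    (n : ℕ) (A : ℕ → Finset X) (α β : ℕ → ℝ)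
    (hA0 : A 0 = ∅) (hAn : A n = Finset.univ)
    (hAnest : ∀ i, i < n → A i ⊂ A (i + 1))
    (hα0 : α 0 = 0) (hαn : α n = 1)
    (hαmono : ∀ i j, i ≤ j → j ≤ n → α i ≤ α j)
    (hβ0 : β 0 = 0) (hβn : β n = 1)
    (hβmono : ∀ i j, i ≤ j → j ≤ n → β i ≤ β j)
    (hαβ : ∀ i, i ≤ n → α i ≤ β i)
    (i j : ℕ) (hi : 1 ≤ i) (hij : i ≤ j) (hj : j ≤ n) :
    (credalGPB n A α β).Nonempty ∧
      IsLeast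
        ((fun p : X → ℝ => ∑ x ∈ (Finset.Icc i j).biUnion (fun k => A k \ A (k - 1)), p x) ''
          credalGPB n A α β)
        (max 0 (α j - β (i - 1))) := by

  classical
  have hAmono : ∀ a b : ℕ, a ≤ b → b ≤ n → A a ⊆ A b := by
    intro a b hab hbn
    induction b with
    | zero =>
      have : a = 0 := Nat.le_zero.mp hab
      simp [this]
    | succ m ih =>
      by_cases h : a ≤ m
      · exact (ih h (by omega)).trans (hAnest m (by omega)).subset
      · have : a = m + 1 := by omega
        simp [this]
  -- choose points in the gaps
  have hptE : ∀ k : ℕ, ∃ z : X, k < n → z ∈ A (k+1) ∧ z ∉ A k := by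
    intro k
    by_cases hk : k < n
    · obtain ⟨z, hz1, hz2⟩ := Finset.exists_of_ssubset (hAnest k hk)
      exact ⟨z, fun _ => ⟨hz1, hz2⟩⟩
    · exact ⟨Classical.arbitrary X, fun h => absurd h hk⟩
  choose pt hpt using hptE
  obtain ⟨γ, hγdef⟩ : ∃ γ : ℕ → ℝ, ∀ k, γ k = max (α k) (min (α j) (β k)) :=
    ⟨_, fun k => rfl⟩
  have hα0j : (0:ℝ) ≤ α j := hα0 ▸ hαmono 0 j (Nat.zero_le j) hj
  have hαj1 : α j ≤ 1 := hαn ▸ hαmono j n hj le_rfl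
  have hγmono : ∀ a b, a ≤ b → b ≤ n → γ a ≤ γ b := by
    intro a b hab hbn
    rw [hγdef, hγdef]
    exact max_le_max (hαmono a b hab hbn) (min_le_min le_rfl (hβmono a b hab hbn))
  have hγ0 : γ 0 = 0 := by
    rw [hγdef, hα0, hβ0]
    exact max_eq_left (min_le_right _ _)
  have hγn : γ n = 1 := by
    rw [hγdef, hαn, hβn]
    exact max_eq_left (min_le_right _ _)
  obtain ⟨p, hpdef⟩ : ∃ p : X → ℝ,
      ∀ z, p z = ∑ k ∈ Finset.range n, if z = pt k then γ (k+1) - γ k else 0 :=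
    ⟨_, fun z => rfl⟩
  have hmass : ∀ k, k < n → 0 ≤ γ (k+1) - γ k := fun k hk =>
    sub_nonneg.mpr (hγmono k (k+1) (Nat.le_succ k) hk)
  have hpnn : ∀ z, 0 ≤ p z := by
    intro z
    rw [hpdef]
    refine Finset.sum_nonneg fun k hk => ?_
    split
    · exact hmass k (Finset.mem_range.mp hk)
    · exact le_rfl
  have hsum : ∀ S : Finset X, ∑ z ∈ S, p z
      = ∑ k ∈ Finset.range n, if pt k ∈ S then γ (k+1) - γ k else 0 := by
    intro S
    simp_rw [hpdef]
    rw [Finset.sum_comm]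
    refine Finset.sum_congr rfl fun k _ => ?_
    exact Finset.sum_ite_eq' S (pt k) (fun _ => γ (k+1) - γ k)
  have hPA : ∀ m, m ≤ n → ∑ z ∈ A m, p z = γ m := by
    intro m hm
    rw [hsum]
    have hcong : ∀ k ∈ Finset.range n, (if pt k ∈ A m then γ (k+1) - γ k else 0)
        = if k ∈ Finset.range m then γ (k+1) - γ k else 0 := by
      intro k hk
      have hk' := Finset.mem_range.mp hk
      by_cases h : k < m
      · have h1 : pt k ∈ A m := hAmono (k+1) m h hm ((hpt k hk').1)
        simp [h1, h]
      · have h1 : pt k ∉ A m := fun hmem =>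
          (hpt k hk').2 (hAmono m k (by omega) (by omega) hmem)
        have h2 : k ∉ Finset.range m := by simp; omega
        simp [h1, h2]
    rw [Finset.sum_congr rfl hcong, Finset.sum_ite_mem,
      Finset.inter_eq_right.mpr (Finset.range_subset_range.mpr hm),
      Finset.sum_range_sub, hγ0, sub_zero]
  have hpmem : p ∈ credalGPB n A α β := by
    refine ⟨⟨hpnn, ?_⟩, fun k hk1 hkn => ?_⟩
    · have := hPA n le_rfl
      rw [hAn] at this
      rw [this, hγn]
    · have := hPA k hkn
      rw [this, hγdef]
      constructor
      · exact le_max_left _ _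
      · exact max_le (hαβ k hkn) (min_le_right _ _)
  have hsub : A (i-1) ⊆ A j := hAmono (i-1) j (by omega) hj
  have hBU : (Finset.Icc i j).biUnion (fun k => A k \ A (k-1)) = A j \ A (i-1) := by
    ext x
    simp only [Finset.mem_biUnion, Finset.mem_sdiff, Finset.mem_Icc]
    constructor
    · rintro ⟨k, ⟨hik, hkj⟩, hxk, hxk'⟩
      exact ⟨hAmono k j hkj hj hxk,
        fun hx => hxk' (hAmono (i-1) (k-1) (by omega) (by omega) hx)⟩
    · rintro ⟨hxj, hxi⟩
      have hne : {k | x ∈ A k}.Nonempty := ⟨j, hxj⟩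
      set k := sInf {k | x ∈ A k} with hkd
      have hkS : x ∈ A k := Nat.sInf_mem hne
      have hkj : k ≤ j := Nat.sInf_le hxj
      have hik : i ≤ k := by
        by_contra h
        push_neg at h
        exact hxi (hAmono k (i-1) (by omega) (by omega) hkS)
      refine ⟨k, ⟨hik, hkj⟩, hkS, fun hx => ?_⟩
      have := Nat.sInf_le (show k - 1 ∈ {k | x ∈ A k} from hx)
      omega
  have hval : ∀ q : X → ℝ,
      ∑ x ∈ (Finset.Icc i j).biUnion (fun k => A k \ A (k-1)), q x
        = ∑ x ∈ A j, q x - ∑ x ∈ A (i-1), q x := by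
    intro q
    rw [hBU, Finset.sum_sdiff_eq_sub hsub]
  have hγj : γ j = α j := by
    rw [hγdef]
    exact max_eq_left (min_le_left _ _)
  have hkey : γ j - γ (i-1) = max 0 (α j - β (i-1)) := by
    rw [hγj, hγdef]
    rcases le_total (α j) (β (i-1)) with h | h
    · have h2 : α (i-1) ≤ α j := hαmono (i-1) j (by omega) hj
      rw [min_eq_left h, max_eq_right h2, max_eq_left (by linarith)]
      ring
    · have h2 : α (i-1) ≤ β (i-1) := hαβ (i-1) (by omega)
      rw [min_eq_right h, max_eq_right h2, max_eq_right (by linarith)]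
  refine ⟨⟨p, hpmem⟩, ⟨⟨p, hpmem, ?_⟩, ?_⟩⟩
  · show ∑ x ∈ (Finset.Icc i j).biUnion (fun k => A k \ A (k-1)), p x = _
    rw [hval p, hPA j hj, hPA (i-1) (by omega), hkey]
  · rintro v ⟨q, ⟨⟨hqnn, hqsum⟩, hqc⟩, rfl⟩
    show max 0 (α j - β (i-1)) ≤ ∑ x ∈ (Finset.Icc i j).biUnion (fun k => A k \ A (k-1)), q x
    rw [hval q]
    refine max_le ?_ ?_
    · rw [← Finset.sum_sdiff_eq_sub hsub]
      exact Finset.sum_nonneg fun x _ => hqnn x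
    · have h1 : α j ≤ ∑ x ∈ A j, q x := (hqc j (le_trans hi hij) hj).1
      have h2 : ∑ x ∈ A (i-1), q x ≤ β (i-1) := by
        rcases Nat.lt_or_ge i 2 with h | h
        · have hi0 : i - 1 = 0 := by omega
          rw [hi0, hA0, hβ0, Finset.sum_empty]
        · exact (hqc (i-1) (by omega) (by omega)).2
      linarith
end

section
/- Let a generalized p-box on a nonempty finite set X be given by strictly nested sets ∅ = A_0 ⊊ A_1 ⊊ … ⊊ A_n = X with bounds α_i, β_i, credal set 𝒫, and G_k = A_k ∖ A_{k−1}. Let i, l, m, j be integers with 1 ≤ i, l ≥ 0, m ≥ 2 and i + l + m ≤ j ≤ n, and let A = (⋃_{k=i}^{i+l} G_k) ∪ (⋃_{k=i+l+m}^{j} G_k). Then the minimum of P(A) over all probability distributions p ∈ 𝒫 equals max(0, α_{i+l} − β_{i−1}) + max(0, α_j − β_{i+l+m−1}). -/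
open Finset
open scoped Classical

variable {X : Type*}

private lemma tele6 (F : ℕ → ℝ) : ∀ r, ∑ k ∈ Finset.Icc 1 r, (F k - F (k-1)) = F r - F 0 := by
  intro r
  induction r with
  | zero => simp
  | succ r ih =>
    rw [show Finset.Icc 1 (r+1) = insert (r+1) (Finset.Icc 1 r) by ext x; simp; omega,
        Finset.sum_insert (by simp), ih]
    simp

private lemma maxsub6 (a b : ℝ) : max a b - a = max 0 (b - a) := by
  rcases le_total b a with h | h
  · rw [max_eq_left h, max_eq_left (by linarith)]; ring
  · rw [max_eq_right h, max_eq_right (by linarith)]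

private lemma biUnion_G6 {Y : Type*} [DecidableEq Y] (A : ℕ → Finset Y) (a : ℕ) (ha : 1 ≤ a) :
    ∀ b, a ≤ b → (∀ s t, s ≤ t → t ≤ b → A s ⊆ A t) →
    (Finset.Icc a b).biUnion (fun k => A k \ A (k-1)) = A b \ A (a-1) := by
  intro b
  induction b with
  | zero => intro h; omega
  | succ b ih =>
    intro hab hmono
    rcases Nat.lt_or_ge a (b+1) with hlt | hge
    · have hab' : a ≤ b := by omega
      have hmono' : ∀ s t, s ≤ t → t ≤ b → A s ⊆ A t := fun s t h1 h2 =>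
        hmono s t h1 (by omega)
      rw [show Finset.Icc a (b+1) = insert (b+1) (Finset.Icc a b) by ext x; simp; omega,
          Finset.biUnion_insert, ih hab' hmono']
      have h1 : A (a-1) ⊆ A b := hmono' _ _ (by omega) (by omega)
      have h2 : A b ⊆ A (b+1) := hmono _ _ (by omega) (by omega)
      ext x
      simp only [Finset.mem_union, Finset.mem_sdiff, Nat.add_sub_cancel]
      constructor
      · rintro (⟨h, h'⟩ | ⟨h, h'⟩)
        · exact ⟨h, fun hx => h' (h1 hx)⟩
        · exact ⟨h2 h, h'⟩
      · rintro ⟨h, h'⟩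
        by_cases hb : x ∈ A b
        · exact Or.inr ⟨hb, h'⟩
        · exact Or.inl ⟨h, hb⟩
    · have : a = b + 1 := by omega
      subst this
      simp

noncomputable def Faux6 (i l m j : ℕ) (α β : ℕ → ℝ) (k : ℕ) : ℝ :=
  if k < i then β k
  else if k ≤ i + l then max (β (i-1)) (α k)
  else if k < i + l + m then β k
  else if k ≤ j then max (β (i+l+m-1)) (α k)
  else max (max (β (i+l+m-1)) (α j)) (α k)

section FauxLemmas
variable {n i l m j : ℕ} {α β : ℕ → ℝ}
variable (hαmono : ∀ s t, s ≤ t → t ≤ n → α s ≤ α t)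
  (hβmono : ∀ s t, s ≤ t → t ≤ n → β s ≤ β t)
  (hαβ : ∀ s, s ≤ n → α s ≤ β s)
  (hi : 1 ≤ i) (hm : 2 ≤ m) (hilm : i + l + m ≤ j) (hj : j ≤ n)

set_option linter.unusedSectionVars false

include hαmono hβmono hαβ hi hm hilm hj

private lemma Faux6_ge (k : ℕ) (hk : k ≤ n) : α k ≤ Faux6 i l m j α β k := by
  unfold Faux6
  split_ifs with h1 h2 h3 h4
  · exact hαβ k hk
  · exact le_max_right _ _
  · exact hαβ k hk
  · exact le_max_right _ _
  · exact le_max_right _ _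

private lemma Faux6_le (k : ℕ) (hk : k ≤ n) : Faux6 i l m j α β k ≤ β k := by
  unfold Faux6
  split_ifs with h1 h2 h3 h4
  · exact le_refl _
  · exact max_le (hβmono _ _ (by omega) hk) (hαβ k hk)
  · exact le_refl _
  · exact max_le (hβmono _ _ (by omega) hk) (hαβ k hk)
  · exact max_le (max_le (hβmono _ _ (by omega) hk)
      (le_trans (hαβ j hj) (hβmono _ _ (by omega) hk))) (hαβ k hk)

private lemma Faux6_step (k : ℕ) (hk : k + 1 ≤ n) :
    Faux6 i l m j α β k ≤ Faux6 i l m j α β (k + 1) := by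
  unfold Faux6
  split_ifs with h1 h2 h3 h4 h5 h6 h7 h8 <;>
    first
    | omega
    | exact hβmono _ _ (by omega) (by omega)
    | exact le_max_left _ _
    | exact le_trans (le_max_left _ _) (le_max_left _ _)
    | exact max_le (le_max_left _ _)
        (le_trans (hαmono _ _ (by omega) (by omega)) (le_max_right _ _))
    | exact max_le (hβmono _ _ (by omega) (by omega))
        (le_trans (hαβ _ (by omega)) (hβmono _ _ (by omega) (by omega)))
    | exact le_trans (hβmono _ _ (by omega) (by omega)) (le_max_left _ _)
    | exact max_le (le_trans (le_max_left _ _) (le_max_left _ _))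
        (le_trans (hαmono _ j (by omega) (by omega))
          (le_trans (le_max_right (β (i+l+m-1)) _) (le_max_left _ _)))

end FauxLemmas

theorem statement6 [Fintype X] [Nonempty X] [DecidableEq X]
    (n : ℕ) (A : ℕ → Finset X) (α β : ℕ → ℝ)
    (hA0 : A 0 = ∅) (hAn : A n = Finset.univ)
    (hAnest : ∀ i, i < n → A i ⊂ A (i + 1))
    (hα0 : α 0 = 0) (hαn : α n = 1)
    (hαmono : ∀ i j, i ≤ j → j ≤ n → α i ≤ α j)
    (hβ0 : β 0 = 0) (hβn : β n = 1)
    (hβmono : ∀ i j, i ≤ j → j ≤ n → β i ≤ β j)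
    (hαβ : ∀ i, i ≤ n → α i ≤ β i)
    (i l m j : ℕ) (hi : 1 ≤ i) (hm : 2 ≤ m) (hilm : i + l + m ≤ j) (hj : j ≤ n) :
    IsLeast
      ((fun p : X → ℝ =>
          ∑ x ∈ ((Finset.Icc i (i + l)).biUnion (fun k => A k \ A (k - 1)) ∪
                  (Finset.Icc (i + l + m) j).biUnion (fun k => A k \ A (k - 1))), p x) ''
        credalGPB n A α β)
      (max 0 (α (i + l) - β (i - 1)) + max 0 (α j - β (i + l + m - 1))) := by
  -- monotonicity of the nested sets
  have hmono : ∀ s t, s ≤ t → t ≤ n → A s ⊆ A t := by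
    intro s t hst htn
    induction t with
    | zero => simp_all
    | succ t ih =>
      rcases Nat.lt_or_ge s (t+1) with h | h
      · exact (ih (by omega) (by omega)).trans (hAnest t (by omega)).subset
      · have : s = t + 1 := by omega
        subst this; exact Finset.Subset.refl _
  have hU1 : (Finset.Icc i (i+l)).biUnion (fun k => A k \ A (k-1)) = A (i+l) \ A (i-1) :=
    biUnion_G6 A i hi (i+l) (by omega) (fun s t h1 h2 => hmono s t h1 (by omega))
  have hU2 : (Finset.Icc (i+l+m) j).biUnion (fun k => A k \ A (k-1)) = A j \ A (i+l+m-1) :=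
    biUnion_G6 A (i+l+m) (by omega) j hilm (fun s t h1 h2 => hmono s t h1 (by omega))
  have hdisj : Disjoint (A (i+l) \ A (i-1)) (A j \ A (i+l+m-1)) := by
    rw [Finset.disjoint_left]
    intro x hx1 hx2
    rw [Finset.mem_sdiff] at hx1 hx2
    exact hx2.2 (hmono (i+l) (i+l+m-1) (by omega) (by omega) hx1.1)
  have hsplit : ∀ p : X → ℝ,
      ∑ x ∈ ((Finset.Icc i (i + l)).biUnion (fun k => A k \ A (k - 1)) ∪
              (Finset.Icc (i + l + m) j).biUnion (fun k => A k \ A (k - 1))), p x =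
      (∑ x ∈ A (i+l), p x - ∑ x ∈ A (i-1), p x) +
      (∑ x ∈ A j, p x - ∑ x ∈ A (i+l+m-1), p x) := by
    intro p
    rw [hU1, hU2, Finset.sum_union hdisj,
        Finset.sum_sdiff_eq_sub (hmono (i-1) (i+l) (by omega) (by omega)),
        Finset.sum_sdiff_eq_sub (hmono (i+l+m-1) j (by omega) hj)]
  constructor
  · -- membership: construct the minimizing distribution
    have hpt0 : ∀ k : ℕ, ∃ x : X, 1 ≤ k → k ≤ n → x ∈ A k \ A (k-1) := by
      intro k
      by_cases h : 1 ≤ k ∧ k ≤ n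
      · have h' := hAnest (k-1) (by omega)
        rw [Nat.sub_add_cancel h.1] at h'
        obtain ⟨x, hx1, hx2⟩ := Finset.exists_of_ssubset h'
        exact ⟨x, fun _ _ => Finset.mem_sdiff.2 ⟨hx1, hx2⟩⟩
      · exact ⟨Classical.arbitrary X, fun h1 h2 => absurd ⟨h1, h2⟩ h⟩
    choose pt hpt using hpt0
    set F := Faux6 i l m j α β with hF
    have hFge : ∀ k, k ≤ n → α k ≤ F k :=
      fun k hk => Faux6_ge hαmono hβmono hαβ hi hm hilm hj k hk
    have hFle : ∀ k, k ≤ n → F k ≤ β k :=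
      fun k hk => Faux6_le hαmono hβmono hαβ hi hm hilm hj k hk
    have hF0 : F 0 = 0 := by
      have h1 := hFle 0 (Nat.zero_le n); have h2 := hFge 0 (Nat.zero_le n)
      rw [hβ0] at h1; rw [hα0] at h2; linarith
    have hFn : F n = 1 := by
      have h1 := hFle n le_rfl; have h2 := hFge n le_rfl
      rw [hβn] at h1; rw [hαn] at h2; linarith
    have hFstep : ∀ k, 1 ≤ k → k ≤ n → F (k-1) ≤ F k := by
      intro k h1 h2
      have := Faux6_step hαmono hβmono hαβ hi hm hilm hj (k-1) (by omega)
      rwa [Nat.sub_add_cancel h1] at this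
    set p : X → ℝ := fun x => ∑ k ∈ Finset.Icc 1 n, (F k - F (k-1)) * (if x = pt k then 1 else 0)
      with hp
    have hptA : ∀ k r, 1 ≤ k → k ≤ n → r ≤ n → (pt k ∈ A r ↔ k ≤ r) := by
      intro k r h1 h2 h3
      have hk := hpt k h1 h2
      rw [Finset.mem_sdiff] at hk
      constructor
      · intro hmem
        by_contra hc
        push_neg at hc
        exact hk.2 (hmono r (k-1) (by omega) (by omega) hmem)
      · intro hkr
        exact hmono k r hkr h3 hk.1
    have hsumT : ∀ T : Finset X, ∑ x ∈ T, p x =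
        ∑ k ∈ Finset.Icc 1 n, (F k - F (k-1)) * (if pt k ∈ T then 1 else 0) := by
      intro T
      simp only [hp]
      rw [Finset.sum_comm]
      apply Finset.sum_congr rfl
      intro k _
      rw [← Finset.mul_sum, Finset.sum_ite_eq' T (pt k) (fun _ => (1:ℝ))]
    have hSA : ∀ r, r ≤ n → ∑ x ∈ A r, p x = F r := by
      intro r hr
      rw [hsumT (A r)]
      have step1 : ∀ k ∈ Finset.Icc 1 n,
          (F k - F (k-1)) * (if pt k ∈ A r then (1:ℝ) else 0)
            = if k ≤ r then F k - F (k-1) else 0 := by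
        intro k hk
        simp only [Finset.mem_Icc] at hk
        by_cases h : k ≤ r
        · rw [if_pos ((hptA k r hk.1 hk.2 hr).mpr h), if_pos h, mul_one]
        · rw [if_neg (fun hmem => h ((hptA k r hk.1 hk.2 hr).mp hmem)), if_neg h, mul_zero]
      rw [Finset.sum_congr rfl step1, ← Finset.sum_filter,
          show (Finset.Icc 1 n).filter (fun k => k ≤ r) = Finset.Icc 1 r from by
            ext x; simp; omega,
          tele6, hF0]
      ring
    have hpn : ∀ x, 0 ≤ p x := by
      intro x
      simp only [hp]
      apply Finset.sum_nonneg
      intro k hk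
      simp only [Finset.mem_Icc] at hk
      have := hFstep k hk.1 hk.2
      apply mul_nonneg (by linarith)
      split_ifs <;> norm_num
    have htot : ∑ x, p x = 1 := by
      have h := hSA n le_rfl
      rw [hAn, hFn] at h
      exact h
    refine ⟨p, ⟨⟨hpn, htot⟩, fun k h1 h2 => ?_⟩, ?_⟩
    · rw [hSA k h2]
      exact ⟨hFge k h2, hFle k h2⟩
    · show ∑ x ∈ _, p x = _
      rw [hsplit p, hSA (i+l) (by omega), hSA (i-1) (by omega), hSA j hj,
          hSA (i+l+m-1) (by omega)]
      have e1 : F (i-1) = β (i-1) := by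
        simp only [hF, Faux6]; rw [if_pos (by omega)]
      have e2 : F (i+l) = max (β (i-1)) (α (i+l)) := by
        simp only [hF, Faux6]; rw [if_neg (by omega), if_pos (by omega)]
      have e3 : F (i+l+m-1) = β (i+l+m-1) := by
        simp only [hF, Faux6]; rw [if_neg (by omega), if_neg (by omega), if_pos (by omega)]
      have e4 : F j = max (β (i+l+m-1)) (α j) := by
        simp only [hF, Faux6]
        rw [if_neg (by omega), if_neg (by omega), if_neg (by omega), if_pos le_rfl]
      rw [e1, e2, e3, e4, maxsub6, maxsub6]
  · -- lower bound
    rintro v ⟨p, ⟨⟨hpn, -⟩, hpc⟩, rfl⟩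
    show _ ≤ ∑ x ∈ _, p x
    rw [hsplit p]
    have hb1 : ∑ x ∈ A (i-1), p x ≤ β (i-1) := by
      rcases Nat.eq_or_lt_of_le hi with h | h
      · rw [show i - 1 = 0 by omega, hA0, hβ0]; simp
      · exact (hpc (i-1) (by omega) (by omega)).2
    have ha1 : α (i+l) ≤ ∑ x ∈ A (i+l), p x := (hpc (i+l) (by omega) (by omega)).1
    have hm1 : ∑ x ∈ A (i-1), p x ≤ ∑ x ∈ A (i+l), p x :=
      Finset.sum_le_sum_of_subset_of_nonneg (hmono _ _ (by omega) (by omega))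
        (fun x _ _ => hpn x)
    have hb2 : ∑ x ∈ A (i+l+m-1), p x ≤ β (i+l+m-1) :=
      (hpc (i+l+m-1) (by omega) (by omega)).2
    have ha2 : α j ≤ ∑ x ∈ A j, p x := (hpc j (by omega) hj).1
    have hm2 : ∑ x ∈ A (i+l+m-1), p x ≤ ∑ x ∈ A j, p x :=
      Finset.sum_le_sum_of_subset_of_nonneg (hmono _ _ (by omega) hj)
        (fun x _ _ => hpn x)
    exact add_le_add (max_le (by linarith) (by linarith))
      (max_le (by linarith) (by linarith))
end

section
/- Let a generalized p-box on a nonempty finite set X be given by strictly nested sets ∅ = A_0 ⊊ A_1 ⊊ … ⊊ A_n = X with bounds α_i, β_i, credal set 𝒫, and G_k = A_k ∖ A_{k−1}. For A ⊆ X let K = {k ∈ {1,…,n} : G_k ⊆ A} and let A_* = ⋃_{k∈K} G_k. Write K as the disjoint union of its maximal runs of consecutive integers {i_1,…,j_1}, …, {i_R,…,j_R}. Then the minimum of P(A) over all p ∈ 𝒫 equals the minimum of P(A_*) over all p ∈ 𝒫, and both equal ∑_{r=1}^{R} max(0, α_{j_r} − β_{i_r−1}). -/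
open Finset
open scoped Classical

variable {X : Type*}

private lemma tele_sum (f : ℕ → ℝ) (m : ℕ) : ∀ b, m ≤ b →
    ∑ k ∈ Finset.Ioc m b, (f k - f (k - 1)) = f b - f m := by
  intro b hb
  induction b, hb using Nat.le_induction with
  | base => simp
  | succ b hb ih =>
    rw [Finset.sum_Ioc_succ_top hb, ih]
    have h : b + 1 - 1 = b := by omega
    rw [h]; ring

theorem statement7 [Fintype X] [Nonempty X] [DecidableEq X]
    (n : ℕ) (A : ℕ → Finset X) (α β : ℕ → ℝ)
    (hA0 : A 0 = ∅) (hAn : A n = Finset.univ)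
    (hAnest : ∀ i, i < n → A i ⊂ A (i + 1))
    (hα0 : α 0 = 0) (hαn : α n = 1)
    (hαmono : ∀ i j, i ≤ j → j ≤ n → α i ≤ α j)
    (hβ0 : β 0 = 0) (hβn : β n = 1)
    (hβmono : ∀ i j, i ≤ j → j ≤ n → β i ≤ β j)
    (hαβ : ∀ i, i ≤ n → α i ≤ β i)
    (B : Finset X) (R : ℕ) (I J : ℕ → ℕ)
    -- the maximal runs of consecutive integers of `K = {k ∈ {1,…,n} : G_k ⊆ B}` are
    -- `{I r, …, J r}` for `r = 1, …, R`:
    (hIJ : ∀ r, 1 ≤ r → r ≤ R → 1 ≤ I r ∧ I r ≤ J r ∧ J r ≤ n)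
    (hgap : ∀ r, 1 ≤ r → r < R → J r + 1 < I (r + 1))
    (hK : (Finset.Icc 1 n).filter (fun k => A k \ A (k - 1) ⊆ B) =
      (Finset.Icc 1 R).biUnion (fun r => Finset.Icc (I r) (J r))) :
    IsLeast ((fun p : X → ℝ => ∑ x ∈ B, p x) '' credalGPB n A α β)
      (∑ r ∈ Finset.Icc 1 R, max 0 (α (J r) - β (I r - 1))) ∧
    IsLeast
      ((fun p : X → ℝ =>
          ∑ x ∈ ((Finset.Icc 1 n).filter (fun k => A k \ A (k - 1) ⊆ B)).biUnion
              (fun k => A k \ A (k - 1)), p x) ''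
        credalGPB n A α β)
      (∑ r ∈ Finset.Icc 1 R, max 0 (α (J r) - β (I r - 1))) := by
  classical
  set K : Finset ℕ := (Finset.Icc 1 n).filter (fun k => A k \ A (k - 1) ⊆ B) with hKdef
  have hKsub : ∀ k, k ∈ K → k ∈ Finset.Icc 1 n := fun k hk =>
    Finset.mem_of_mem_filter k (hKdef ▸ hk)
  have hKB : ∀ k ∈ K, A k \ A (k - 1) ⊆ B := by
    intro k hk
    rw [hKdef] at hk
    exact (Finset.mem_filter.mp hk).2
  have hn1 : 1 ≤ n := by
    rcases Nat.eq_zero_or_pos n with h | h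
    · exfalso
      have : (Finset.univ : Finset X) = ∅ := by rw [← hAn, h, hA0]
      exact (Finset.univ_nonempty).ne_empty this
    · exact h
  have Amono : ∀ i j, i ≤ j → j ≤ n → A i ⊆ A j := by
    intro i j hij hj
    induction j, hij using Nat.le_induction with
    | base => exact subset_rfl
    | succ j hij ih =>
      exact (ih (by omega)).trans (hAnest j (by omega)).subset
  have hJltI : ∀ r s, 1 ≤ r → r < s → s ≤ R → J r < I s := by
    intro r s h1 hrs
    induction s, hrs using Nat.le_induction with
    | base =>
      intro hR
      show J r < I (r + 1)
      have := hgap r h1 (by omega)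
      omega
    | succ s hrs ih =>
      intro hR
      show J r < I (s + 1)
      have h1' := ih (by omega)
      have h2 := hgap s (by omega) (by omega)
      have h3 := (hIJ s (by omega) (by omega)).2.1
      omega
  have hmemK : ∀ k, k ∈ K ↔ ∃ r, 1 ≤ r ∧ r ≤ R ∧ I r ≤ k ∧ k ≤ J r := by
    intro k
    rw [hK]
    simp only [Finset.mem_biUnion, Finset.mem_Icc]
    constructor
    · rintro ⟨r, ⟨h1, h2⟩, h3, h4⟩; exact ⟨r, h1, h2, h3, h4⟩
    · rintro ⟨r, h1, h2, h3, h4⟩; exact ⟨r, ⟨h1, h2⟩, h3, h4⟩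
  have hIm1notK : ∀ r, 1 ≤ r → r ≤ R → I r - 1 ∉ K := by
    intro r h1 hR hmem
    obtain ⟨r', h1', hR', hle, hge⟩ := (hmemK _).mp hmem
    obtain ⟨hI1, hIJr, hJn⟩ := hIJ r h1 hR
    obtain ⟨hI1', hIJr', hJn'⟩ := hIJ r' h1' hR'
    rcases lt_trichotomy r' r with h | h | h
    · have h2 := hgap r' h1' (by omega)
      have h3 : I (r' + 1) ≤ I r := by
        rcases eq_or_lt_of_le (by omega : r' + 1 ≤ r) with he | hlt
        · exact le_of_eq (congrArg I he)
        · have h4 := hJltI (r' + 1) r (by omega) hlt hR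
          have h5 := (hIJ (r' + 1) (by omega) (by omega)).2.1
          omega
      omega
    · subst h
      omega
    · have := hJltI r r' h1 h hR'
      omega
  have h0K : (0 : ℕ) ∉ K := by
    intro h
    have := hKsub 0 h
    simp at this
  set m : ℕ → ℕ := fun k => Nat.findGreatest (fun j => j ∉ K) k with hmdef
  have hmnotK : ∀ k, m k ∉ K := fun k => Nat.findGreatest_spec (P := fun j => j ∉ K) (Nat.zero_le k) h0K
  have hmle : ∀ k, m k ≤ k := fun k => Nat.findGreatest_le (P := fun j => j ∉ K) k
  have hmmono : Monotone m := monotone_nat_of_le_succ (fun k =>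
    Nat.le_findGreatest (P := fun j => j ∉ K) ((hmle k).trans (Nat.le_succ k)) (hmnotK k))
  have hmeq : ∀ k, k ∉ K → m k = k := fun k hk =>
    le_antisymm (hmle k) (Nat.le_findGreatest (P := fun j => j ∉ K) le_rfl hk)
  set c : ℕ → ℝ := fun k => max (α k) (β (m k)) with hcdef
  have hβle1 : ∀ i, i ≤ n → β i ≤ 1 := fun i hi => hβn ▸ hβmono i n hi le_rfl
  have hc0 : c 0 = 0 := by
    have hm0 : m 0 = 0 := Nat.le_zero.mp (hmle 0)
    show max (α 0) (β (m 0)) = 0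
    rw [hm0, hα0, hβ0, max_self]
  have hcn : c n = 1 := by
    have h1 : β (m n) ≤ 1 := hβle1 _ (hmle n)
    show max (α n) (β (m n)) = 1
    rw [hαn]
    exact max_eq_left h1
  have hcmono : ∀ k l, k ≤ l → l ≤ n → c k ≤ c l := fun k l hkl hl =>
    max_le_max (hαmono k l hkl hl) (hβmono _ _ (hmmono hkl) ((hmle l).trans hl))
  have hcα : ∀ k, k ≤ n → α k ≤ c k := fun k _ => le_max_left _ _
  have hcβ : ∀ k, k ≤ n → c k ≤ β k := fun k hk =>
    max_le (hαβ k hk) (hβmono _ _ (hmle k) hk)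
  have hcnotK : ∀ k, k ≤ n → k ∉ K → c k = β k := by
    intro k hk hkK
    show max (α k) (β (m k)) = β k
    rw [hmeq k hkK]
    exact max_eq_right (hαβ k hk)
  have hcJ : ∀ r, 1 ≤ r → r ≤ R → c (J r) = max (α (J r)) (β (I r - 1)) := by
    intro r h1 hR
    obtain ⟨hI1, hIJr, hJn⟩ := hIJ r h1 hR
    have hq : m (J r) = I r - 1 := by
      have hub : m (J r) ≤ I r - 1 := by
        by_contra h
        push_neg at h
        exact hmnotK (J r) ((hmemK _).mpr ⟨r, h1, hR, by omega, hmle (J r)⟩)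
      have hlb : I r - 1 ≤ m (J r) := Nat.le_findGreatest (P := fun j => j ∉ K) (by omega) (hIm1notK r h1 hR)
      omega
    show max (α (J r)) (β (m (J r))) = _
    rw [hq]
  -- choice of points
  have hGne : ∀ k, 1 ≤ k → k ≤ n → (A k \ A (k - 1)).Nonempty := by
    intro k h1 hk
    have hss : A (k - 1) ⊂ A k := by
      have := hAnest (k - 1) (by omega)
      rwa [show k - 1 + 1 = k by omega] at this
    obtain ⟨y, hy, hy'⟩ := Finset.exists_of_ssubset hss
    exact ⟨y, Finset.mem_sdiff.mpr ⟨hy, hy'⟩⟩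
  have hxex : ∀ k : ℕ, ∃ y : X, k ∈ Finset.Icc 1 n →
      (y ∈ A k \ A (k - 1) ∧ (y ∈ B ↔ k ∈ K)) := by
    intro k
    by_cases hk : k ∈ Finset.Icc 1 n
    · rw [Finset.mem_Icc] at hk
      by_cases hkK : k ∈ K
      · obtain ⟨y, hy⟩ := hGne k hk.1 hk.2
        have hyB : y ∈ B := hKB k hkK hy
        exact ⟨y, fun _ => ⟨hy, by simp [hkK, hyB]⟩⟩
      · have hns : ¬ A k \ A (k - 1) ⊆ B := fun h =>
          hkK (hKdef ▸ Finset.mem_filter.mpr ⟨Finset.mem_Icc.mpr hk, h⟩)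
        obtain ⟨y, hyG, hyB⟩ := Finset.not_subset.mp hns
        exact ⟨y, fun _ => ⟨hyG, by simp [hkK, hyB]⟩⟩
    · exact ⟨Classical.arbitrary X, fun h => absurd h hk⟩
  choose xf hxf using hxex
  have hxG : ∀ k ∈ Finset.Icc 1 n, xf k ∈ A k \ A (k - 1) := fun k hk => (hxf k hk).1
  have hxB : ∀ k ∈ Finset.Icc 1 n, (xf k ∈ B ↔ k ∈ K) := fun k hk => (hxf k hk).2
  -- the distribution
  set p : X → ℝ :=
    fun y => ∑ k ∈ (Finset.Icc 1 n).filter (fun k => xf k = y), (c k - c (k - 1)) with hpdef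
  have hterm : ∀ k ∈ Finset.Icc 1 n, 0 ≤ c k - c (k - 1) := by
    intro k hk
    rw [Finset.mem_Icc] at hk
    have := hcmono (k - 1) k (by omega) hk.2
    linarith
  have hpnn : ∀ y, 0 ≤ p y := fun y =>
    Finset.sum_nonneg (fun k hk => hterm k (Finset.mem_of_mem_filter k hk))
  have hsum : ∀ S : Finset X, ∑ y ∈ S, p y
      = ∑ k ∈ (Finset.Icc 1 n).filter (fun k => xf k ∈ S), (c k - c (k - 1)) := by
    intro S
    have hmaps : ∀ k ∈ (Finset.Icc 1 n).filter (fun k => xf k ∈ S), xf k ∈ S :=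
      fun k hk => (Finset.mem_filter.mp hk).2
    rw [← Finset.sum_fiberwise_of_maps_to hmaps (fun k => c k - c (k - 1))]
    refine Finset.sum_congr rfl (fun y hy => ?_)
    show (∑ k ∈ (Finset.Icc 1 n).filter (fun k => xf k = y), (c k - c (k - 1))) = _
    congr 1
    rw [Finset.filter_filter]
    refine Finset.filter_congr (fun k _ => ?_)
    constructor
    · intro h
      exact ⟨by rw [h]; exact hy, h⟩
    · exact And.right
  have htot : ∑ y, p y = 1 := by
    rw [hsum Finset.univ, Finset.filter_true_of_mem (fun k _ => Finset.mem_univ (xf k))]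
    rw [show Finset.Icc 1 n = Finset.Ioc 0 n by
      ext k; simp only [Finset.mem_Icc, Finset.mem_Ioc]; omega]
    rw [tele_sum c 0 n (by omega), hc0, hcn, sub_zero]
  have hPA : ∀ j, 1 ≤ j → j ≤ n → ∑ y ∈ A j, p y = c j := by
    intro j h1 hj
    rw [hsum (A j)]
    have hfil : (Finset.Icc 1 n).filter (fun k => xf k ∈ A j) = Finset.Icc 1 j := by
      ext k
      simp only [Finset.mem_filter, Finset.mem_Icc]
      constructor
      · rintro ⟨⟨hk1, hkn⟩, hmem⟩
        refine ⟨hk1, ?_⟩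
        by_contra h
        push_neg at h
        have hG := hxG k (Finset.mem_Icc.mpr ⟨hk1, hkn⟩)
        rw [Finset.mem_sdiff] at hG
        exact hG.2 (Amono j (k - 1) (by omega) (by omega) hmem)
      · rintro ⟨hk1, hkj⟩
        have hG := hxG k (Finset.mem_Icc.mpr ⟨hk1, by omega⟩)
        rw [Finset.mem_sdiff] at hG
        exact ⟨⟨hk1, by omega⟩, Amono k j hkj hj hG.1⟩
    rw [hfil, show Finset.Icc 1 j = Finset.Ioc 0 j by
      ext k; simp only [Finset.mem_Icc, Finset.mem_Ioc]; omega]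
    rw [tele_sum c 0 j (by omega), hc0, sub_zero]
  have hpmem : p ∈ credalGPB n A α β := by
    refine ⟨⟨hpnn, htot⟩, fun k h1 hk => ?_⟩
    rw [hPA k h1 hk]
    exact ⟨hcα k hk, hcβ k hk⟩
  -- disjointness facts
  have hrundisj : (↑(Finset.Icc 1 R) : Set ℕ).PairwiseDisjoint
      (fun r => Finset.Icc (I r) (J r)) := by
    intro r hr s hs hrs
    simp only [Finset.coe_Icc, Set.mem_Icc] at hr hs
    have key : ∀ a b, 1 ≤ a → a ≤ R → 1 ≤ b → b ≤ R → a < b →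
        Disjoint (Finset.Icc (I a) (J a)) (Finset.Icc (I b) (J b)) := by
      intro a b h1 h2 h3 h4 hab
      have := hJltI a b h1 hab h4
      rw [Finset.disjoint_left]
      intro x hx hx'
      rw [Finset.mem_Icc] at hx hx'
      omega
    rcases lt_or_gt_of_ne hrs with h | h
    · exact key r s hr.1 hr.2 hs.1 hs.2 h
    · exact (key s r hs.1 hs.2 hr.1 hr.2 h).symm
  have hKsum : ∀ f : ℕ → ℝ, ∑ k ∈ K, (f k - f (k - 1))
      = ∑ r ∈ Finset.Icc 1 R, (f (J r) - f (I r - 1)) := by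
    intro f
    rw [hK, Finset.sum_biUnion hrundisj]
    refine Finset.sum_congr rfl (fun r hr => ?_)
    rw [Finset.mem_Icc] at hr
    obtain ⟨hI1, hIJr, hJn⟩ := hIJ r hr.1 hr.2
    rw [show Finset.Icc (I r) (J r) = Finset.Ioc (I r - 1) (J r) by
      ext k; simp only [Finset.mem_Icc, Finset.mem_Ioc]; omega]
    exact tele_sum f (I r - 1) (J r) (by omega)
  have hKc : ∑ k ∈ K, (c k - c (k - 1))
      = ∑ r ∈ Finset.Icc 1 R, max 0 (α (J r) - β (I r - 1)) := by
    rw [hKsum c]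
    refine Finset.sum_congr rfl (fun r hr => ?_)
    rw [Finset.mem_Icc] at hr
    obtain ⟨hI1, hIJr, hJn⟩ := hIJ r hr.1 hr.2
    rw [hcJ r hr.1 hr.2, hcnotK (I r - 1) (by omega) (hIm1notK r hr.1 hr.2)]
    rw [← max_sub_sub_right, sub_self, max_comm]
  have hfilB : (Finset.Icc 1 n).filter (fun k => xf k ∈ B) = K := by
    ext k
    simp only [Finset.mem_filter]
    constructor
    · rintro ⟨hk, hmem⟩
      exact (hxB k hk).mp hmem
    · intro hk
      have hk' := hKsub k hk
      exact ⟨hk', (hxB k hk').mpr hk⟩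
  have hGdisj : ∀ k l, k ∈ Finset.Icc 1 n → l ∈ Finset.Icc 1 n → k ≠ l →
      Disjoint (A k \ A (k - 1)) (A l \ A (l - 1)) := by
    intro k l hk hl hkl
    rw [Finset.mem_Icc] at hk hl
    rw [Finset.disjoint_left]
    intro a hak hal
    rw [Finset.mem_sdiff] at hak hal
    rcases lt_or_gt_of_ne hkl with h | h
    · exact hal.2 (Amono k (l - 1) (by omega) (by omega) hak.1)
    · exact hak.2 (Amono l (k - 1) (by omega) (by omega) hal.1)
  have hfilBstar : (Finset.Icc 1 n).filter
      (fun k => xf k ∈ K.biUnion (fun k => A k \ A (k - 1))) = K := by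
    ext k
    simp only [Finset.mem_filter, Finset.mem_biUnion]
    constructor
    · rintro ⟨hk, l, hlK, hmem⟩
      have hl := hKsub l hlK
      have hkl : k = l := by
        by_contra hne
        exact (Finset.disjoint_left.mp (hGdisj k l hk hl hne) (hxG k hk)) hmem
      exact hkl ▸ hlK
    · intro hk
      have hk' := hKsub k hk
      exact ⟨hk', k, hk, hxG k hk'⟩
  have hsumB : ∑ y ∈ B, p y = ∑ r ∈ Finset.Icc 1 R, max 0 (α (J r) - β (I r - 1)) := by
    rw [hsum B, hfilB, hKc]
  have hsumBstar : ∑ y ∈ K.biUnion (fun k => A k \ A (k - 1)), p y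
      = ∑ r ∈ Finset.Icc 1 R, max 0 (α (J r) - β (I r - 1)) := by
    rw [hsum _, hfilBstar, hKc]
  have hGpd : (↑K : Set ℕ).PairwiseDisjoint (fun k => A k \ A (k - 1)) := by
    intro k hk l hl hkl
    exact hGdisj k l (hKsub k hk) (hKsub l hl) hkl
  -- lower bound
  have hlb : ∀ q ∈ credalGPB n A α β,
      (∑ r ∈ Finset.Icc 1 R, max 0 (α (J r) - β (I r - 1)))
        ≤ ∑ y ∈ K.biUnion (fun k => A k \ A (k - 1)), q y := by
    intro q hq
    obtain ⟨⟨hqnn, hqtot⟩, hqc⟩ := hq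
    rw [Finset.sum_biUnion hGpd]
    have hGsum : ∀ k ∈ K, ∑ y ∈ A k \ A (k - 1), q y
        = (fun j => ∑ y ∈ A j, q y) k - (fun j => ∑ y ∈ A j, q y) (k - 1) := by
      intro k hk
      have hk' := hKsub k hk
      rw [Finset.mem_Icc] at hk'
      exact Finset.sum_sdiff_eq_sub (Amono (k - 1) k (by omega) hk'.2)
    rw [Finset.sum_congr rfl hGsum, hKsum (fun j => ∑ y ∈ A j, q y)]
    refine Finset.sum_le_sum (fun r hr => ?_)
    rw [Finset.mem_Icc] at hr
    obtain ⟨hI1, hIJr, hJn⟩ := hIJ r hr.1 hr.2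
    have hJb := (hqc (J r) (by omega) hJn).1
    have hIb : ∑ y ∈ A (I r - 1), q y ≤ β (I r - 1) := by
      rcases Nat.eq_zero_or_pos (I r - 1) with h0 | h0
      · rw [h0, hA0, hβ0, Finset.sum_empty]
      · exact (hqc (I r - 1) h0 (by omega)).2
    have hmono : ∑ y ∈ A (I r - 1), q y ≤ ∑ y ∈ A (J r), q y :=
      Finset.sum_le_sum_of_subset_of_nonneg (Amono (I r - 1) (J r) (by omega) hJn)
        (fun y _ _ => hqnn y)
    have hgoal : max 0 (α (J r) - β (I r - 1))
        ≤ (∑ y ∈ A (J r), q y) - ∑ y ∈ A (I r - 1), q y :=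
      max_le (by linarith) (by linarith)
    exact hgoal
  have hBstarsub : K.biUnion (fun k => A k \ A (k - 1)) ⊆ B :=
    Finset.biUnion_subset.mpr hKB
  constructor
  · constructor
    · exact ⟨p, hpmem, hsumB⟩
    · rintro v ⟨q, hq, rfl⟩
      exact (hlb q hq).trans (Finset.sum_le_sum_of_subset_of_nonneg hBstarsub
        (fun y _ _ => hq.1.1 y))
  · constructor
    · exact ⟨p, hpmem, hsumBstar⟩
    · rintro v ⟨q, hq, rfl⟩
      exact hlb q hq
end

section
/- Let X = {x_1,…,x_n} be a finite set with n distinct elements and let a generalized p-box on X be given by the nested sets A_i = {x_1,…,x_i} with bounds α_i, β_i and credal set 𝒫. Then for every i ∈ {1,…,n}, the minimum of p(x_i) over p ∈ 𝒫 equals max(0, α_i − β_{i−1}) and the maximum of p(x_i) over p ∈ 𝒫 equals β_i − α_{i−1}. -/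
open Finset
open scoped Classical

variable {X : Type*}

private lemma tele_sum_s9 (γ : ℕ → ℝ) (k : ℕ) :
    ∑ j ∈ Finset.Icc 1 k, (γ j - γ (j - 1)) = γ k - γ 0 := by
  induction k with
  | zero => simp
  | succ k ih =>
    rw [Finset.sum_Icc_succ_top (by omega), ih]
    simp only [Nat.add_sub_cancel]
    ring

theorem statement9 [Fintype X] [DecidableEq X]
    (n : ℕ) (x : ℕ → X)
    (hinj : Set.InjOn x (Set.Icc 1 n))
    (hsurj : (Finset.Icc 1 n).image x = Finset.univ)
    (α β : ℕ → ℝ)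
    (hα0 : α 0 = 0) (hαn : α n = 1)
    (hαmono : ∀ i j, i ≤ j → j ≤ n → α i ≤ α j)
    (hβ0 : β 0 = 0) (hβn : β n = 1)
    (hβmono : ∀ i j, i ≤ j → j ≤ n → β i ≤ β j)
    (hαβ : ∀ i, i ≤ n → α i ≤ β i)
    (i : ℕ) (hi : 1 ≤ i) (hin : i ≤ n) :
    IsLeast
      ((fun p : X → ℝ => p (x i)) '' credalGPB n (fun k => (Finset.Icc 1 k).image x) α β)
      (max 0 (α i - β (i - 1))) ∧
    IsGreatest
      ((fun p : X → ℝ => p (x i)) '' credalGPB n (fun k => (Finset.Icc 1 k).image x) α β)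
      (β i - α (i - 1)) :=  by
  obtain ⟨m, rfl⟩ := Nat.exists_eq_succ_of_ne_zero (by omega : i ≠ 0)
  simp only [Nat.succ_eq_add_one, Nat.add_sub_cancel] at hi hin ⊢
  have hαnn : ∀ k, k ≤ n → 0 ≤ α k := fun k hk => hα0 ▸ hαmono 0 k (Nat.zero_le k) hk
  have hinjk : ∀ k, k ≤ n → ∀ a ∈ Finset.Icc 1 k, ∀ b ∈ Finset.Icc 1 k, x a = x b → a = b := by
    intro k hk a ha b hb hab
    rw [Finset.mem_Icc] at ha hb
    exact hinj ⟨ha.1, le_trans ha.2 hk⟩ ⟨hb.1, le_trans hb.2 hk⟩ hab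
  have hsplit : ∀ p : X → ℝ, ∑ y ∈ (Finset.Icc 1 (m+1)).image x, p y
      = ∑ y ∈ (Finset.Icc 1 m).image x, p y + p (x (m+1)) := by
    intro p
    rw [Finset.sum_image (hinjk (m+1) hin), Finset.sum_image (hinjk m (by omega)),
        Finset.sum_Icc_succ_top (by omega)]
  -- generic construction of an element of the credal set from a cumulative function γ
  have key : ∀ γ : ℕ → ℝ, γ 0 = 0 → γ n = 1 →
      (∀ j, 1 ≤ j → j ≤ n → γ (j-1) ≤ γ j) →
      (∀ k, 1 ≤ k → k ≤ n → α k ≤ γ k ∧ γ k ≤ β k) →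
      (γ (m+1) - γ m) ∈
        ((fun p : X → ℝ => p (x (m+1))) ''
          credalGPB n (fun k => (Finset.Icc 1 k).image x) α β) := by
    intro γ h0 h1 hmono hb
    set inv := Function.invFunOn x (Set.Icc 1 n) with hinvdef
    set p : X → ℝ := fun y => γ (inv y) - γ (inv y - 1) with hp
    have hinvx : ∀ j, 1 ≤ j → j ≤ n → inv (x j) = j := by
      intro j h1j h2j
      exact hinj.leftInvOn_invFunOn ⟨h1j, h2j⟩
    have hrepr : ∀ y : X, ∃ j, 1 ≤ j ∧ j ≤ n ∧ x j = y := by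
      intro y
      have hy : y ∈ (Finset.Icc 1 n).image x := by rw [hsurj]; exact Finset.mem_univ y
      obtain ⟨j, hj, hxy⟩ := Finset.mem_image.mp hy
      rw [Finset.mem_Icc] at hj
      exact ⟨j, hj.1, hj.2, hxy⟩
    have hpj : ∀ j, 1 ≤ j → j ≤ n → p (x j) = γ j - γ (j - 1) := by
      intro j h1j h2j
      simp only [hp]
      rw [hinvx j h1j h2j]
    have hsumA : ∀ k, k ≤ n → ∑ y ∈ (Finset.Icc 1 k).image x, p y = γ k := by
      intro k hk
      rw [Finset.sum_image (hinjk k hk)]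
      have hc : ∀ j ∈ Finset.Icc 1 k, p (x j) = γ j - γ (j-1) := by
        intro j hj
        rw [Finset.mem_Icc] at hj
        exact hpj j hj.1 (le_trans hj.2 hk)
      rw [Finset.sum_congr rfl hc, tele_sum_s9, h0, sub_zero]
    refine ⟨p, ⟨⟨?_, ?_⟩, ?_⟩, ?_⟩
    · intro y
      obtain ⟨j, h1j, h2j, rfl⟩ := hrepr y
      rw [hpj j h1j h2j]
      have := hmono j h1j h2j
      linarith
    · have huniv : (Finset.univ : Finset X) = (Finset.Icc 1 n).image x := hsurj.symm
      rw [huniv, hsumA n le_rfl, h1]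
    · intro k h1k h2k
      rw [hsumA k h2k]
      exact hb k h1k h2k
    · simp only
      rw [hpj (m+1) (by omega) hin]
      simp [Nat.add_sub_cancel]
  constructor
  · constructor
    · -- membership: the minimum is attained
      set γmin : ℕ → ℝ := fun k => if k < m+1 then min (α (m+1)) (β k) else α k with hγ
      have hval : γmin (m+1) - γmin m = max 0 (α (m+1) - β m) := by
        simp only [hγ, if_pos (Nat.lt_succ_self m), if_neg (lt_irrefl (m+1))]
        rcases le_total (α (m+1)) (β m) with h | h
        · rw [min_eq_left h, max_eq_left (by linarith)]; ring
        · rw [min_eq_right h, max_eq_right (by linarith)]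
      rw [← hval]
      apply key
      · simp only [hγ, if_pos (Nat.succ_pos m), hβ0]
        exact min_eq_right (hαnn (m+1) hin)
      · simp only [hγ, if_neg (by omega : ¬ n < m+1)]
        exact hαn
      · intro j h1j h2j
        rcases lt_trichotomy j (m+1) with h | h | h
        · simp only [hγ, if_pos h, if_pos (by omega : j - 1 < m + 1)]
          exact min_le_min le_rfl (hβmono (j-1) j (by omega) h2j)
        · subst h
          simp only [hγ, Nat.add_sub_cancel, if_pos (Nat.lt_succ_self m),
            if_neg (lt_irrefl (m+1))]
          exact min_le_left _ _
        · simp only [hγ, if_neg (by omega : ¬ j < m + 1), if_neg (by omega : ¬ j - 1 < m + 1)]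
          exact hαmono (j-1) j (by omega) h2j
      · intro k h1k h2k
        by_cases h : k < m + 1
        · simp only [hγ, if_pos h]
          exact ⟨le_min (hαmono k (m+1) (by omega) hin) (hαβ k h2k), min_le_right _ _⟩
        · simp only [hγ, if_neg h]
          exact ⟨le_rfl, hαβ k h2k⟩
    · -- lower bound
      rintro v ⟨p, hp, rfl⟩
      have hPm : α m ≤ ∑ y ∈ (Finset.Icc 1 m).image x, p y ∧
          ∑ y ∈ (Finset.Icc 1 m).image x, p y ≤ β m := by
        rcases Nat.eq_zero_or_pos m with rfl | hm
        · simp [hα0, hβ0]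
        · exact hp.2 m hm (by omega)
      have hPi := hp.2 (m+1) (by omega) hin
      have hs := hsplit p
      have h0p := hp.1.1 (x (m+1))
      simp only at *
      apply max_le h0p
      linarith [hPi.1, hPm.2]
  · constructor
    · -- membership: maximum is attained
      set γmax : ℕ → ℝ := fun k => if k < m+1 then min (α m) (β k) else max (β (m+1)) (α k)
        with hγ
      have hval : γmax (m+1) - γmax m = β (m+1) - α m := by
        simp only [hγ, if_pos (Nat.lt_succ_self m), if_neg (lt_irrefl (m+1))]
        rw [max_eq_left (hαβ (m+1) hin), min_eq_left (hαβ m (by omega))]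
      rw [← hval]
      apply key
      · simp only [hγ, if_pos (Nat.succ_pos m), hβ0]
        exact min_eq_right (hαnn m (by omega))
      · simp only [hγ, if_neg (by omega : ¬ n < m+1)]
        rw [hαn]
        exact max_eq_right (hβn ▸ hβmono (m+1) n hin le_rfl)
      · intro j h1j h2j
        rcases lt_trichotomy j (m+1) with h | h | h
        · simp only [hγ, if_pos h, if_pos (by omega : j - 1 < m + 1)]
          exact min_le_min le_rfl (hβmono (j-1) j (by omega) h2j)
        · subst h
          simp only [hγ, Nat.add_sub_cancel, if_pos (Nat.lt_succ_self m),
            if_neg (lt_irrefl (m+1))]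
          exact le_trans (min_le_right _ _)
            (le_trans (hβmono m (m+1) (by omega) hin) (le_max_left _ _))
        · simp only [hγ, if_neg (by omega : ¬ j < m + 1), if_neg (by omega : ¬ j - 1 < m + 1)]
          exact max_le_max le_rfl (hαmono (j-1) j (by omega) h2j)
      · intro k h1k h2k
        by_cases h : k < m + 1
        · simp only [hγ, if_pos h]
          exact ⟨le_min (hαmono k m (by omega) (by omega)) (hαβ k h2k), min_le_right _ _⟩
        · simp only [hγ, if_neg h]
          exact ⟨le_max_right _ _, max_le (hβmono (m+1) k (by omega) h2k) (hαβ k h2k)⟩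
    · -- upper bound
      rintro v ⟨p, hp, rfl⟩
      have hPm : α m ≤ ∑ y ∈ (Finset.Icc 1 m).image x, p y ∧
          ∑ y ∈ (Finset.Icc 1 m).image x, p y ≤ β m := by
        rcases Nat.eq_zero_or_pos m with rfl | hm
        · simp [hα0, hβ0]
        · exact hp.2 m hm (by omega)
      have hPi := hp.2 (m+1) (by omega) hin
      have hs := hsplit p
      simp only at *
      linarith [hPi.2, hPm.1]
end

section
/- Let (l,u) be a reachable probability interval on a finite set X = {x_1,…,x_n} with credal set 𝒫_L. For each permutation σ of {1,…,n}, let 𝒫_σ be the credal set of the σ-p-box obtained from (l,u) and let L''_σ be the probability interval obtained from that σ-p-box. Then 𝒫_L = ⋂_σ 𝒫_σ = ⋂_σ 𝒫_{L''_σ}, where both intersections range over all permutations σ of {1,…,n}. -/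
open Finset
open scoped Classical

variable {X : Type*}

/-- The credal set induced by a probability interval `(l, u)`. -/
def credalPI [Fintype X] (l u : X → ℝ) : Set (X → ℝ) :=
  {p | IsProbDist p ∧ ∀ y, l y ≤ p y ∧ p y ≤ u y}

/-- A probability interval `(l, u)` is reachable. -/
def Reachable [Fintype X] [DecidableEq X] (l u : X → ℝ) : Prop :=
  (∑ y, l y ≤ 1 ∧ 1 ≤ ∑ y, u y) ∧
    ∀ y : X, u y + ∑ z ∈ Finset.univ.erase y, l z ≤ 1 ∧
      1 ≤ l y + ∑ z ∈ Finset.univ.erase y, u z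

/-- The nested set `A_i^σ = {x_{σ(1)}, …, x_{σ(i)}}` (here `0`-indexed via `e : Fin n ≃ X`). -/
def Aperm [Fintype X] [DecidableEq X] {n : ℕ} (e : Fin n ≃ X) (σ : Equiv.Perm (Fin n))
    (i : ℕ) : Finset X :=
  (Finset.univ.filter (fun k : Fin n => (k : ℕ) < i)).image (fun k => e (σ k))

/-- `α_i^σ = max(∑_{x ∈ A_i^σ} l(x), 1 − ∑_{x ∉ A_i^σ} u(x))`, with `α_0^σ = 0`. -/
noncomputable def alphaPerm [Fintype X] [DecidableEq X] {n : ℕ} (e : Fin n ≃ X)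
    (σ : Equiv.Perm (Fin n)) (l u : X → ℝ) (i : ℕ) : ℝ :=
  if i = 0 then 0 else
    max (∑ y ∈ Aperm e σ i, l y) (1 - ∑ y ∈ (Aperm e σ i)ᶜ, u y)

/-- `β_i^σ = min(∑_{x ∈ A_i^σ} u(x), 1 − ∑_{x ∉ A_i^σ} l(x))`, with `β_0^σ = 0`. -/
noncomputable def betaPerm [Fintype X] [DecidableEq X] {n : ℕ} (e : Fin n ≃ X)
    (σ : Equiv.Perm (Fin n)) (l u : X → ℝ) (i : ℕ) : ℝ :=
  if i = 0 then 0 else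
    min (∑ y ∈ Aperm e σ i, u y) (1 - ∑ y ∈ (Aperm e σ i)ᶜ, l y)

/-- The credal set `𝒫_σ` of the `σ`-p-box obtained from the probability interval `(l, u)`. -/
def credalPerm [Fintype X] [DecidableEq X] {n : ℕ} (e : Fin n ≃ X) (σ : Equiv.Perm (Fin n))
    (l u : X → ℝ) : Set (X → ℝ) :=
  {p | IsProbDist p ∧ ∀ i, 1 ≤ i → i ≤ n →
    alphaPerm e σ l u i ≤ ∑ y ∈ Aperm e σ i, p y ∧
      ∑ y ∈ Aperm e σ i, p y ≤ betaPerm e σ l u i}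

/-- `l''_σ(x_{σ(i)}) = max(0, α_i^σ − β_{i−1}^σ)`. -/
noncomputable def lPerm [Fintype X] [DecidableEq X] {n : ℕ} (e : Fin n ≃ X)
    (σ : Equiv.Perm (Fin n)) (l u : X → ℝ) (y : X) : ℝ :=
  max 0 (alphaPerm e σ l u ((σ.symm (e.symm y)).val + 1) -
    betaPerm e σ l u (σ.symm (e.symm y)).val)

/-- `u''_σ(x_{σ(i)}) = β_i^σ − α_{i−1}^σ`. -/
noncomputable def uPerm [Fintype X] [DecidableEq X] {n : ℕ} (e : Fin n ≃ X)
    (σ : Equiv.Perm (Fin n)) (l u : X → ℝ) (y : X) : ℝ :=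
  betaPerm e σ l u ((σ.symm (e.symm y)).val + 1) -
    alphaPerm e σ l u (σ.symm (e.symm y)).val

lemma Aperm_zero [Fintype X] [DecidableEq X] {n : ℕ} (e : Fin n ≃ X)
    (σ : Equiv.Perm (Fin n)) : Aperm e σ 0 = ∅ := by
  simp [Aperm]

lemma Aperm_succ [Fintype X] [DecidableEq X] {n : ℕ} (e : Fin n ≃ X)
    (σ : Equiv.Perm (Fin n)) (j : Fin n) :
    Aperm e σ (j.val + 1) = insert (e (σ j)) (Aperm e σ j.val) := by
  unfold Aperm
  have hf : (Finset.univ.filter (fun k : Fin n => (k : ℕ) < j.val + 1))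
      = insert j (Finset.univ.filter (fun k : Fin n => (k : ℕ) < j.val)) := by
    ext k
    simp only [Finset.mem_filter, Finset.mem_univ, true_and, Finset.mem_insert, Fin.ext_iff]
    omega
  rw [hf, Finset.image_insert]

lemma not_mem_Aperm [Fintype X] [DecidableEq X] {n : ℕ} (e : Fin n ≃ X)
    (σ : Equiv.Perm (Fin n)) (j : Fin n) : e (σ j) ∉ Aperm e σ j.val := by
  intro h
  simp only [Aperm, Finset.mem_image, Finset.mem_filter, Finset.mem_univ, true_and] at h
  obtain ⟨k, hk, hek⟩ := h
  have : k = j := σ.injective (e.injective hek)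
  subst this
  omega

lemma key_bounds [Fintype X] [DecidableEq X] {n : ℕ} (e : Fin n ≃ X)
    (σ : Equiv.Perm (Fin n)) (l u p : X → ℝ) (hp : p ∈ credalPI l u) (i : ℕ) :
    alphaPerm e σ l u i ≤ ∑ y ∈ Aperm e σ i, p y ∧
      ∑ y ∈ Aperm e σ i, p y ≤ betaPerm e σ l u i := by
  obtain ⟨⟨hp0, hp1⟩, hplu⟩ := hp
  rcases Nat.eq_zero_or_pos i with h0 | h0
  · subst h0
    simp [alphaPerm, betaPerm, Aperm_zero]
  · have hi : i ≠ 0 := h0.ne'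
    have hsum : ∑ y ∈ Aperm e σ i, p y + ∑ y ∈ (Aperm e σ i)ᶜ, p y = 1 := by
      rw [Finset.sum_add_sum_compl]; exact hp1
    constructor
    · rw [alphaPerm, if_neg hi]
      apply max_le
      · exact Finset.sum_le_sum fun y _ => (hplu y).1
      · have := Finset.sum_le_sum fun y (_ : y ∈ (Aperm e σ i)ᶜ) => (hplu y).2
        linarith
    · rw [betaPerm, if_neg hi]
      apply le_min
      · exact Finset.sum_le_sum fun y _ => (hplu y).2
      · have := Finset.sum_le_sum fun y (_ : y ∈ (Aperm e σ i)ᶜ) => (hplu y).1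
        linarith

theorem statement10 [Fintype X] [Nonempty X] [DecidableEq X] {n : ℕ} (e : Fin n ≃ X)
    (l u : X → ℝ) (hlu : ∀ y, 0 ≤ l y ∧ l y ≤ u y ∧ u y ≤ 1)
    (hreach : Reachable l u) :
    (credalPI l u = ⋂ σ : Equiv.Perm (Fin n), credalPerm e σ l u) ∧
      (credalPI l u = ⋂ σ : Equiv.Perm (Fin n), credalPI (lPerm e σ l u) (uPerm e σ l u)) := by
  have hn : 0 < n := Nat.pos_of_ne_zero (by
    rintro rfl; exact (e.symm (Classical.arbitrary X)).elim0)
  -- For the reverse directions we use the swap permutation putting `y` first.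
  have hA1 : ∀ y : X, Aperm e (Equiv.swap ⟨0, hn⟩ (e.symm y)) 1 = {y} := by
    intro y
    have h := Aperm_succ e (Equiv.swap ⟨0, hn⟩ (e.symm y)) ⟨0, hn⟩
    rw [Equiv.swap_apply_left] at h
    simpa [Aperm_zero] using h
  constructor
  · ext p
    simp only [Set.mem_iInter]
    constructor
    · intro hp σ
      exact ⟨hp.1, fun i _ _ => key_bounds e σ l u p hp i⟩
    · intro hp
      refine ⟨(hp 1).1, fun y => ?_⟩
      set σ := Equiv.swap ⟨0, hn⟩ (e.symm y) with hσ
      have h := (hp σ).2 1 le_rfl hn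
      rw [hA1 y, Finset.sum_singleton] at h
      rw [alphaPerm, if_neg one_ne_zero, hA1 y, Finset.sum_singleton] at h
      rw [betaPerm, if_neg one_ne_zero, hA1 y, Finset.sum_singleton] at h
      exact ⟨le_trans (le_max_left _ _) h.1, le_trans h.2 (min_le_left _ _)⟩
  · ext p
    simp only [Set.mem_iInter]
    constructor
    · intro hp σ
      refine ⟨hp.1, fun y => ?_⟩
      unfold lPerm uPerm
      set j : Fin n := σ.symm (e.symm y) with hj
      have hey : e (σ j) = y := by simp [hj]
      have hins : Aperm e σ (j.val + 1) = insert y (Aperm e σ j.val) := by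
        rw [Aperm_succ, hey]
      have hnm : y ∉ Aperm e σ j.val := hey ▸ not_mem_Aperm e σ j
      have hsum : ∑ z ∈ Aperm e σ (j.val + 1), p z
          = p y + ∑ z ∈ Aperm e σ j.val, p z := by
        rw [hins, Finset.sum_insert hnm]
      have k1 := key_bounds e σ l u p hp (j.val + 1)
      have k0 := key_bounds e σ l u p hp j.val
      constructor
      · apply max_le (hp.1.1 y)
        linarith [k1.1, k0.2]
      · linarith [k1.2, k0.1]
    · intro hp
      refine ⟨(hp 1).1, fun y => ?_⟩
      set σ := Equiv.swap ⟨0, hn⟩ (e.symm y) with hσ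
      have hjy : σ.symm (e.symm y) = ⟨0, hn⟩ := by
        rw [hσ, Equiv.symm_swap, Equiv.swap_apply_right]
      have hy' := (hp σ).2 y
      simp only [lPerm, uPerm, hjy] at hy'
      norm_num [alphaPerm, betaPerm, hA1 y] at hy'
      constructor
      · have h := hy'.1.2.1
        rw [hA1 y, Finset.sum_singleton] at h
        exact h
      · have h := hy'.2.1
        rw [hA1 y, Finset.sum_singleton] at h
        exact h
end

section
/- Let (l,u) be a reachable probability interval on a finite set X = {x_1,…,x_n} with credal set 𝒫_L, and let S be a set of permutations of {1,…,n} such that every element of X occurs as the first element x_{σ(1)} or as the last element x_{σ(n)} of some σ ∈ S. Then 𝒫_L = ⋂_{σ∈S} 𝒫_{L''_σ}, where L''_σ is the probability interval obtained from the σ-p-box of (l,u). -/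
open Finset
open scoped Classical

variable {X : Type*}

section Aux
variable [Fintype X] [DecidableEq X] {n : ℕ} (e : Fin n ≃ X) (σ : Equiv.Perm (Fin n))

lemma mem_Aperm {i : ℕ} {y : X} : y ∈ Aperm e σ i ↔ ((σ.symm (e.symm y)) : ℕ) < i := by
  simp only [Aperm, Finset.mem_image, Finset.mem_filter, Finset.mem_univ, true_and]
  constructor
  · rintro ⟨k, hk, rfl⟩; simpa using hk
  · intro h; exact ⟨σ.symm (e.symm y), h, by simp⟩

lemma Aperm_zero_s11 : Aperm e σ 0 = ∅ := by
  ext y; simp [mem_Aperm]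

lemma Aperm_succ_s11 {i : ℕ} (hi : i < n) :
    Aperm e σ (i + 1) = insert (e (σ ⟨i, hi⟩)) (Aperm e σ i) := by
  ext y
  rw [Finset.mem_insert, mem_Aperm, mem_Aperm, Nat.lt_succ_iff_lt_or_eq]
  have heq : y = e (σ ⟨i, hi⟩) ↔ ((σ.symm (e.symm y)) : ℕ) = i := by
    constructor
    · rintro rfl; simp
    · intro h
      have h1 : σ.symm (e.symm y) = ⟨i, hi⟩ := Fin.ext h
      have h2 : e.symm y = σ ⟨i, hi⟩ := by rw [← h1]; simp
      rw [← h2]; simp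
  tauto

lemma not_mem_Aperm_self {i : ℕ} (hi : i < n) : e (σ ⟨i, hi⟩) ∉ Aperm e σ i := by
  rw [mem_Aperm]; simp

lemma Aperm_top : Aperm e σ n = Finset.univ := by
  ext y; simp [mem_Aperm, Fin.is_lt]

/-- Bounds on `P(A)` for any `p` in the credal set of `(l,u)`. -/
lemma bounds_of_memPI {l u : X → ℝ} {p : X → ℝ} (hp : p ∈ credalPI l u) (A : Finset X) :
    max (∑ y ∈ A, l y) (1 - ∑ y ∈ Aᶜ, u y) ≤ ∑ y ∈ A, p y ∧
      ∑ y ∈ A, p y ≤ min (∑ y ∈ A, u y) (1 - ∑ y ∈ Aᶜ, l y) := by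
  obtain ⟨⟨hp0, hp1⟩, hplu⟩ := hp
  have h1 : ∑ y ∈ A, l y ≤ ∑ y ∈ A, p y := Finset.sum_le_sum fun y _ => (hplu y).1
  have h2 : ∑ y ∈ A, p y ≤ ∑ y ∈ A, u y := Finset.sum_le_sum fun y _ => (hplu y).2
  have h3 : ∑ y ∈ Aᶜ, l y ≤ ∑ y ∈ Aᶜ, p y := Finset.sum_le_sum fun y _ => (hplu y).1
  have h4 : ∑ y ∈ Aᶜ, p y ≤ ∑ y ∈ Aᶜ, u y := Finset.sum_le_sum fun y _ => (hplu y).2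
  have h5 : ∑ y ∈ A, p y + ∑ y ∈ Aᶜ, p y = 1 := by
    rw [Finset.sum_add_sum_compl]; exact hp1
  exact ⟨max_le h1 (by linarith), le_min h2 (by linarith)⟩

lemma alpha_beta_bounds {l u : X → ℝ} {p : X → ℝ} (hp : p ∈ credalPI l u) (i : ℕ) :
    alphaPerm e σ l u i ≤ ∑ y ∈ Aperm e σ i, p y ∧
      ∑ y ∈ Aperm e σ i, p y ≤ betaPerm e σ l u i := by
  rcases Nat.eq_zero_or_pos i with rfl | hi
  · simp [alphaPerm, betaPerm, Aperm_zero_s11]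
  · have hne : i ≠ 0 := Nat.pos_iff_ne_zero.mp hi
    rw [alphaPerm, betaPerm, if_neg hne, if_neg hne]
    exact bounds_of_memPI hp (Aperm e σ i)

/-- If `y` is the first element of the permutation, then `l''_σ(y) = l(y)` and
`u''_σ(y) = u(y)`. -/
lemma key_first {l u : X → ℝ} (hlu : ∀ y, 0 ≤ l y ∧ l y ≤ u y ∧ u y ≤ 1)
    (hreach : Reachable l u) (hn : 0 < n) {y : X} (hy : e (σ ⟨0, hn⟩) = y) :
    lPerm e σ l u y = l y ∧ uPerm e σ l u y = u y := by
  have hidx : σ.symm (e.symm y) = ⟨0, hn⟩ := by rw [← hy]; simp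
  have hA1 : Aperm e σ 1 = {y} := by
    rw [show (1 : ℕ) = 0 + 1 from rfl, Aperm_succ_s11 e σ hn, Aperm_zero_s11, hy]
    rfl
  have hA1c : (Aperm e σ 1)ᶜ = Finset.univ.erase y := by
    rw [hA1]; ext z; simp [Finset.mem_erase, eq_comm]
  have halpha : alphaPerm e σ l u 1 = l y := by
    rw [alphaPerm, if_neg one_ne_zero, hA1c, hA1, Finset.sum_singleton]
    exact max_eq_left (by linarith [(hreach.2 y).2])
  have hbeta : betaPerm e σ l u 1 = u y := by
    rw [betaPerm, if_neg one_ne_zero, hA1c, hA1, Finset.sum_singleton]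
    exact min_eq_left (by linarith [(hreach.2 y).1])
  have hb0 : betaPerm e σ l u 0 = 0 := by simp [betaPerm]
  have ha0 : alphaPerm e σ l u 0 = 0 := by simp [alphaPerm]
  constructor
  · rw [lPerm, hidx]
    simp only [Fin.val_mk, zero_add, halpha, hb0, sub_zero]
    exact max_eq_right (hlu y).1
  · rw [uPerm, hidx]
    simp only [Fin.val_mk, zero_add, hbeta, ha0, sub_zero]

/-- If `y` is the last element of the permutation, then `l''_σ(y) = l(y)` and
`u''_σ(y) = u(y)`. -/
lemma key_last {l u : X → ℝ} (hlu : ∀ y, 0 ≤ l y ∧ l y ≤ u y ∧ u y ≤ 1)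
    (hreach : Reachable l u) (hn : 0 < n) {y : X}
    (hy : e (σ ⟨n - 1, Nat.sub_lt hn Nat.one_pos⟩) = y) :
    lPerm e σ l u y = l y ∧ uPerm e σ l u y = u y := by
  rcases eq_or_lt_of_le (by omega : 1 ≤ n) with h1 | h2
  · -- n = 1 : last element is also the first
    have hn1 : n = 1 := h1.symm
    have : (⟨n - 1, Nat.sub_lt hn Nat.one_pos⟩ : Fin n) = ⟨0, hn⟩ := by
      apply Fin.ext; simp [hn1]
    rw [this] at hy
    exact key_first e σ hlu hreach hn hy
  · -- 2 ≤ n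
    have hn2 : 2 ≤ n := h2
    have hlt : n - 1 < n := Nat.sub_lt hn Nat.one_pos
    have hpred : n - 1 + 1 = n := Nat.succ_pred_eq_of_pos hn
    have hidx : σ.symm (e.symm y) = ⟨n - 1, hlt⟩ := by rw [← hy]; simp
    have hnm1ne : n - 1 ≠ 0 := by omega
    have hnne : n ≠ 0 := by omega
    have hins : Aperm e σ n = insert y (Aperm e σ (n - 1)) := by
      have h := Aperm_succ_s11 e σ hlt
      rw [hpred, hy] at h
      exact h
    have hnotmem : y ∉ Aperm e σ (n - 1) := by
      rw [← hy]; exact not_mem_Aperm_self e σ hlt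
    have hAnm1 : Aperm e σ (n - 1) = Finset.univ.erase y := by
      rw [← Aperm_top e σ, hins, Finset.erase_insert hnotmem]
    have hAnm1c : (Aperm e σ (n - 1))ᶜ = {y} := by
      rw [hAnm1]; ext z; simp [Finset.mem_erase]
    have halphan : alphaPerm e σ l u n = 1 := by
      rw [alphaPerm, if_neg hnne, Aperm_top, Finset.compl_univ, Finset.sum_empty]
      rw [sub_zero]
      exact max_eq_right hreach.1.1
    have hbetan : betaPerm e σ l u n = 1 := by
      rw [betaPerm, if_neg hnne, Aperm_top, Finset.compl_univ, Finset.sum_empty]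
      rw [sub_zero]
      exact min_eq_right hreach.1.2
    have halpham : alphaPerm e σ l u (n - 1) = 1 - u y := by
      rw [alphaPerm, if_neg hnm1ne, hAnm1c, hAnm1, Finset.sum_singleton]
      exact max_eq_right (by linarith [(hreach.2 y).1])
    have hbetam : betaPerm e σ l u (n - 1) = 1 - l y := by
      rw [betaPerm, if_neg hnm1ne, hAnm1c, hAnm1, Finset.sum_singleton]
      exact min_eq_right (by linarith [(hreach.2 y).2])
    constructor
    · rw [lPerm, hidx]
      simp only [Fin.val_mk, hpred, halphan, hbetam]
      rw [show (1 : ℝ) - (1 - l y) = l y by ring]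
      exact max_eq_right (hlu y).1
    · rw [uPerm, hidx]
      simp only [Fin.val_mk, hpred, hbetan, halpham]
      ring

/-- Every element of the credal set of `(l,u)` lies in the credal set of every `σ`-p-box. -/
lemma forward_incl {l u : X → ℝ} {p : X → ℝ} (hp : p ∈ credalPI l u) :
    p ∈ credalPI (lPerm e σ l u) (uPerm e σ l u) := by
  refine ⟨hp.1, fun y => ?_⟩
  set k : Fin n := σ.symm (e.symm y) with hk
  have hyk : e (σ ⟨(k : ℕ), k.isLt⟩) = y := by
    simp [hk]
  have hsucc : Aperm e σ ((k : ℕ) + 1) = insert y (Aperm e σ (k : ℕ)) := by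
    rw [Aperm_succ_s11 e σ k.isLt, hyk]
  have hnotmem : y ∉ Aperm e σ (k : ℕ) := by
    rw [← hyk]; exact not_mem_Aperm_self e σ k.isLt
  have hsum : ∑ z ∈ Aperm e σ ((k : ℕ) + 1), p z = p y + ∑ z ∈ Aperm e σ (k : ℕ), p z := by
    rw [hsucc, Finset.sum_insert hnotmem]
  obtain ⟨ha1, hb1⟩ := alpha_beta_bounds e σ hp ((k : ℕ) + 1)
  obtain ⟨ha0, hb0⟩ := alpha_beta_bounds e σ hp (k : ℕ)
  have hpy : 0 ≤ p y := hp.1.1 y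
  constructor
  · rw [lPerm, ← hk]
    refine max_le hpy ?_
    rw [hsum] at ha1
    linarith
  · rw [uPerm, ← hk]
    rw [hsum] at hb1
    linarith

end Aux

theorem statement11 [Fintype X] [Nonempty X] [DecidableEq X] {n : ℕ} (hn : 0 < n)
    (e : Fin n ≃ X)
    (l u : X → ℝ) (hlu : ∀ y, 0 ≤ l y ∧ l y ≤ u y ∧ u y ≤ 1)
    (hreach : Reachable l u)
    (S : Set (Equiv.Perm (Fin n)))
    (hS : ∀ y : X, ∃ σ ∈ S,
      e (σ ⟨0, hn⟩) = y ∨ e (σ ⟨n - 1, Nat.sub_lt hn Nat.one_pos⟩) = y) :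
    credalPI l u = ⋂ σ ∈ S, credalPI (lPerm e σ l u) (uPerm e σ l u) := by
  ext p
  simp only [Set.mem_iInter]
  constructor
  · intro hp σ hσ
    exact forward_incl e σ hp
  · intro hp
    obtain ⟨σ₀, hσ₀, _⟩ := hS (Classical.arbitrary X)
    have hprob : IsProbDist p := (hp σ₀ hσ₀).1
    refine ⟨hprob, fun y => ?_⟩
    obtain ⟨σ, hσ, hcase⟩ := hS y
    have hkey : lPerm e σ l u y = l y ∧ uPerm e σ l u y = u y := by
      rcases hcase with h | h
      · exact key_first e σ hlu hreach hn h
      · exact key_last e σ hlu hreach hn h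
    have := (hp σ hσ).2 y
    rw [hkey.1, hkey.2] at this
    exact this
end

section
/- Let (l,u) be a probability interval on a nonempty finite set X. Then the credal set 𝒫_L is nonempty if and only if ∑_{x∈X} l(x) ≤ 1 ≤ ∑_{x∈X} u(x). -/
open Finset
open scoped Classical

variable {X : Type*}

theorem statement12 [Fintype X] [Nonempty X]
    (l u : X → ℝ) (hlu : ∀ y, 0 ≤ l y ∧ l y ≤ u y ∧ u y ≤ 1) :
    (credalPI l u).Nonempty ↔ (∑ y, l y ≤ 1 ∧ 1 ≤ ∑ y, u y) := by
  constructor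
  · rintro ⟨p, ⟨⟨hp0, hps⟩, hpl⟩⟩
    constructor
    · calc ∑ y, l y ≤ ∑ y, p y := Finset.sum_le_sum fun y _ => (hpl y).1
        _ = 1 := hps
    · calc (1:ℝ) = ∑ y, p y := hps.symm
        _ ≤ ∑ y, u y := Finset.sum_le_sum fun y _ => (hpl y).2
  · rintro ⟨hL, hU⟩
    set L := ∑ y, l y with hLdef
    set U := ∑ y, u y with hUdef
    by_cases hEq : U = L
    · refine ⟨l, ⟨fun x => (hlu x).1, ?_⟩, fun y => ⟨le_refl _, (hlu y).2.1⟩⟩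
      have : L = 1 := le_antisymm hL (hEq ▸ hU)
      simpa [hLdef] using this
    · have hLU : L < U := lt_of_le_of_ne (Finset.sum_le_sum fun y _ => (hlu y).2.1)
        (Ne.symm hEq)
      set t := (1 - L) / (U - L) with htdef
      have hpos : (0:ℝ) < U - L := by linarith
      have ht0 : 0 ≤ t := div_nonneg (by linarith) (by linarith)
      have ht1 : t ≤ 1 := by
        rw [htdef, div_le_one hpos]; linarith
      refine ⟨fun x => l x + t * (u x - l x), ⟨fun x => ?_, ?_⟩, fun y => ⟨?_, ?_⟩⟩
      · have := (hlu x).1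
        have h2 := (hlu x).2.1
        dsimp only
        nlinarith
      · have : ∑ x, (l x + t * (u x - l x)) = L + t * (U - L) := by
          rw [Finset.sum_add_distrib, ← Finset.mul_sum]
          simp [Finset.sum_sub_distrib, hLdef, hUdef]
        rw [this, htdef, div_mul_cancel₀]
        · ring
        · linarith
      · have h2 := (hlu y).2.1
        dsimp only
        nlinarith
      · have h2 := (hlu y).2.1
        dsimp only
        nlinarith
end

section
/- Let (l,u) be a probability interval on a nonempty finite set X with ∑_{x∈X} l(x) ≤ 1 ≤ ∑_{x∈X} u(x). Then the following are equivalent: (i) for every x ∈ X, u(x) + ∑_{y≠x} l(y) ≤ 1 and l(x) + ∑_{y≠x} u(y) ≥ 1; (ii) for every x ∈ X there exist probability distributions p and p' in 𝒫_L with p(x) = l(x) and p'(x) = u(x). -/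
open Finset
open scoped Classical

variable {X : Type*}

lemma exists_interp {ι : Type*} (S : Finset ι) (l u : ι → ℝ)
    (hle : ∀ z ∈ S, l z ≤ u z) (t : ℝ)
    (h1 : ∑ z ∈ S, l z ≤ t) (h2 : t ≤ ∑ z ∈ S, u z) :
    ∃ p : ι → ℝ, (∀ z ∈ S, l z ≤ p z ∧ p z ≤ u z) ∧ ∑ z ∈ S, p z = t := by
  set L := ∑ z ∈ S, l z with hL
  set U := ∑ z ∈ S, u z with hU
  rcases eq_or_lt_of_le (le_trans h1 h2 : L ≤ U) with hLU | hLU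
  · refine ⟨l, fun z hz => ⟨le_refl _, hle z hz⟩, le_antisymm h1 ?_⟩
    rw [← hL, hLU]; exact h2
  · set c := (t - L) / (U - L) with hc
    have hc0 : 0 ≤ c := div_nonneg (by linarith) (by linarith)
    have hc1 : c ≤ 1 := by
      rw [hc, div_le_one (by linarith)]; linarith
    refine ⟨fun z => l z + c * (u z - l z), fun z hz => ⟨?_, ?_⟩, ?_⟩
    · have := hle z hz
      dsimp only
      nlinarith [mul_nonneg hc0 (sub_nonneg.mpr this)]
    · have := hle z hz
      dsimp only
      nlinarith [mul_nonneg (by linarith : (0:ℝ) ≤ 1 - c) (sub_nonneg.mpr this)]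
    · rw [Finset.sum_add_distrib, ← Finset.mul_sum, Finset.sum_sub_distrib, ← hL, ← hU]
      have hdiv : c * (U - L) = t - L := div_mul_cancel₀ _ (by linarith)
      linarith [hdiv]

lemma exists_mem_credal [Fintype X] [DecidableEq X]
    (l u : X → ℝ) (hlu : ∀ y, 0 ≤ l y ∧ l y ≤ u y ∧ u y ≤ 1)
    (y : X) (v : ℝ) (hv1 : l y ≤ v) (hv2 : v ≤ u y)
    (h1 : ∑ z ∈ Finset.univ.erase y, l z ≤ 1 - v)
    (h2 : 1 - v ≤ ∑ z ∈ Finset.univ.erase y, u z) :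
    ∃ p ∈ credalPI l u, p y = v := by
  obtain ⟨q, hq, hqs⟩ := exists_interp (Finset.univ.erase y) l u
    (fun z _ => (hlu z).2.1) (1 - v) h1 h2
  refine ⟨fun z => if z = y then v else q z, ⟨⟨?_, ?_⟩, ?_⟩, by simp⟩
  · intro z
    by_cases hz : z = y
    · simp [hz]; linarith [(hlu y).1]
    · simp [hz]; linarith [(hq z (Finset.mem_erase.mpr ⟨hz, Finset.mem_univ z⟩)).1, (hlu z).1]
  · rw [← Finset.add_sum_erase _ _ (Finset.mem_univ y),
      Finset.sum_congr rfl (fun z hz => if_neg (Finset.mem_erase.mp hz).1), hqs]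
    simp
  · intro z
    by_cases hz : z = y
    · subst hz; simp [hv1, hv2]
    · simp only [if_neg hz]
      exact hq z (Finset.mem_erase.mpr ⟨hz, Finset.mem_univ z⟩)

theorem statement13 [Fintype X] [Nonempty X] [DecidableEq X]
    (l u : X → ℝ) (hlu : ∀ y, 0 ≤ l y ∧ l y ≤ u y ∧ u y ≤ 1)
    (hsum : ∑ y, l y ≤ 1 ∧ 1 ≤ ∑ y, u y) :
    (∀ y : X, u y + ∑ z ∈ Finset.univ.erase y, l z ≤ 1 ∧
        1 ≤ l y + ∑ z ∈ Finset.univ.erase y, u z) ↔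
      ∀ y : X, (∃ p ∈ credalPI l u, p y = l y) ∧ (∃ p ∈ credalPI l u, p y = u y) := by
  constructor
  · intro h y
    constructor
    · apply exists_mem_credal l u hlu y (l y) le_rfl (hlu y).2.1
      · have := Finset.add_sum_erase Finset.univ l (Finset.mem_univ y)
        linarith [hsum.1]
      · linarith [(h y).2]
    · apply exists_mem_credal l u hlu y (u y) (hlu y).2.1 le_rfl
      · linarith [(h y).1]
      · have := Finset.add_sum_erase Finset.univ u (Finset.mem_univ y)
        linarith [hsum.2, (hlu y).2.2, (hlu y).2.1, (hlu y).1]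
  · intro h y
    obtain ⟨⟨p, ⟨⟨hp0, hps⟩, hpb⟩, hpy⟩, ⟨q, ⟨⟨hq0, hqs⟩, hqb⟩, hqy⟩⟩ := h y
    constructor
    · have h1 : u y + ∑ z ∈ Finset.univ.erase y, q z = 1 := by
        rw [← hqy, Finset.add_sum_erase Finset.univ q (Finset.mem_univ y)]
        exact hqs
      have h2 : ∑ z ∈ Finset.univ.erase y, l z ≤ ∑ z ∈ Finset.univ.erase y, q z :=
        Finset.sum_le_sum fun z _ => (hqb z).1
      linarith
    · have h1 : l y + ∑ z ∈ Finset.univ.erase y, p z = 1 := by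
        rw [← hpy, Finset.add_sum_erase Finset.univ p (Finset.mem_univ y)]
        exact hps
      have h2 : ∑ z ∈ Finset.univ.erase y, p z ≤ ∑ z ∈ Finset.univ.erase y, u z :=
        Finset.sum_le_sum fun z _ => (hpb z).2
      linarith
end

section
/- Let (l,u) be a reachable probability interval on a nonempty finite set X and define, for A ⊆ X, P̲(A) = max(∑_{x∈A} l(x), 1 − ∑_{x∉A} u(x)). Then P̲ is a 2-monotone capacity: P̲(∅) = 0, P̲(X) = 1, P̲ is monotone with respect to set inclusion, and for all A, B ⊆ X, P̲(A ∪ B) + P̲(A ∩ B) ≥ P̲(A) + P̲(B). -/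
open Finset
open scoped Classical

variable {X : Type*}

/-- The lower probability `P̲(A) = max(∑_{x ∈ A} l(x), 1 − ∑_{x ∉ A} u(x))` induced by a
probability interval. -/
noncomputable def lowProb [Fintype X] [DecidableEq X] (l u : X → ℝ) (B : Finset X) : ℝ :=
  max (∑ y ∈ B, l y) (1 - ∑ y ∈ Bᶜ, u y)

theorem statement15 [Fintype X] [Nonempty X] [DecidableEq X]
    (l u : X → ℝ) (hlu : ∀ y, 0 ≤ l y ∧ l y ≤ u y ∧ u y ≤ 1)
    (hreach : Reachable l u) :
    lowProb l u ∅ = 0 ∧ lowProb l u Finset.univ = 1 ∧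
      (∀ B C : Finset X, B ⊆ C → lowProb l u B ≤ lowProb l u C) ∧
      (∀ B C : Finset X,
        lowProb l u B + lowProb l u C ≤ lowProb l u (B ∪ C) + lowProb l u (B ∩ C)) := by
  obtain ⟨⟨hl1, hu1⟩, hre⟩ := hreach
  have hLU : ∀ B : Finset X, ∑ y ∈ B, l y ≤ ∑ y ∈ B, u y :=
    fun B => Finset.sum_le_sum (fun y _ => (hlu y).2.1)
  have key : ∀ B C : Finset X,
      (∑ y ∈ B, l y) + (1 - ∑ y ∈ Cᶜ, u y) ≤ lowProb l u (B ∪ C) + lowProb l u (B ∩ C) := by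
    intro B C
    have hsub : (B ∪ C)ᶜ ⊆ Cᶜ := Finset.compl_subset_compl.mpr Finset.subset_union_right
    have hdiff : Cᶜ \ (B ∪ C)ᶜ = B \ C := by
      ext x; simp [Finset.mem_sdiff, Finset.mem_compl, Finset.mem_union]; tauto
    have hU : ∑ y ∈ Cᶜ, u y = (∑ y ∈ B \ C, u y) + ∑ y ∈ (B ∪ C)ᶜ, u y := by
      rw [← Finset.sum_sdiff hsub, hdiff]
    have hL : ∑ y ∈ B, l y = (∑ y ∈ B ∩ C, l y) + ∑ y ∈ B \ C, l y :=
      (Finset.sum_inter_add_sum_sdiff B C l).symm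
    have h1 : (∑ y ∈ B, l y) + (1 - ∑ y ∈ Cᶜ, u y)
        ≤ (1 - ∑ y ∈ (B ∪ C)ᶜ, u y) + ∑ y ∈ B ∩ C, l y := by
      have := hLU (B \ C)
      rw [hL, hU]; linarith
    calc (∑ y ∈ B, l y) + (1 - ∑ y ∈ Cᶜ, u y)
        ≤ (1 - ∑ y ∈ (B ∪ C)ᶜ, u y) + ∑ y ∈ B ∩ C, l y := h1
      _ ≤ lowProb l u (B ∪ C) + lowProb l u (B ∩ C) :=
          add_le_add (le_max_right _ _) (le_max_left _ _)
  refine ⟨?_, ?_, ?_, ?_⟩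
  · simp only [lowProb, Finset.sum_empty, Finset.compl_empty]
    rw [max_eq_left] <;> linarith
  · simp only [lowProb, Finset.compl_univ, Finset.sum_empty]
    rw [max_eq_right] <;> linarith
  · intro B C hBC
    have h1 : ∑ y ∈ B, l y ≤ ∑ y ∈ C, l y :=
      Finset.sum_le_sum_of_subset_of_nonneg hBC (fun y _ _ => (hlu y).1)
    have h2 : ∑ y ∈ Cᶜ, u y ≤ ∑ y ∈ Bᶜ, u y :=
      Finset.sum_le_sum_of_subset_of_nonneg (Finset.compl_subset_compl.mpr hBC)
        (fun y _ _ => le_trans (hlu y).1 (hlu y).2.1)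
    exact max_le_max h1 (by linarith)
  · intro B C
    have hsum : (∑ y ∈ B, l y) + ∑ y ∈ C, l y
        = (∑ y ∈ B ∪ C, l y) + ∑ y ∈ B ∩ C, l y := (Finset.sum_union_inter).symm
    have husum : (∑ y ∈ Bᶜ, u y) + ∑ y ∈ Cᶜ, u y
        = (∑ y ∈ (B ∪ C)ᶜ, u y) + ∑ y ∈ (B ∩ C)ᶜ, u y := by
      have := Finset.sum_union_inter (s₁ := Bᶜ) (s₂ := Cᶜ) (f := u)
      rw [Finset.compl_union, Finset.compl_inter]; linarith
    rcases max_cases (∑ y ∈ B, l y) (1 - ∑ y ∈ Bᶜ, u y) with ⟨hB, _⟩ | ⟨hB, _⟩ <;>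
      rcases max_cases (∑ y ∈ C, l y) (1 - ∑ y ∈ Cᶜ, u y) with ⟨hC, _⟩ | ⟨hC, _⟩ <;>
      rw [lowProb, lowProb, hB, hC]
    · calc (∑ y ∈ B, l y) + ∑ y ∈ C, l y
          = (∑ y ∈ B ∪ C, l y) + ∑ y ∈ B ∩ C, l y := hsum
        _ ≤ _ := add_le_add (le_max_left _ _) (le_max_left _ _)
    · exact key B C
    · have := key C B
      rw [Finset.union_comm, Finset.inter_comm] at this
      linarith
    · calc (1 - ∑ y ∈ Bᶜ, u y) + (1 - ∑ y ∈ Cᶜ, u y)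
          = (1 - ∑ y ∈ (B ∪ C)ᶜ, u y) + (1 - ∑ y ∈ (B ∩ C)ᶜ, u y) := by linarith
        _ ≤ _ := add_le_add (le_max_right _ _) (le_max_right _ _)
end

section
/- Let m be a mass assignment on a nonempty finite set X with belief function Bel and credal set 𝒫_Bel. Then 𝒫_Bel is nonempty and for every A ⊆ X, Bel(A) = min_{p ∈ 𝒫_Bel} P(A); that is, the belief function is the lower envelope of its credal set. -/
open Finset
open scoped Classical

variable {X : Type*}

/-- Pick a point of `E`, preferring one outside `B` if possible. -/
noncomputable def pickPt [Nonempty X] [DecidableEq X] (B E : Finset X) : X :=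
  if h : (E \ B).Nonempty then h.choose
  else if h2 : E.Nonempty then h2.choose else Classical.arbitrary X

lemma pickPt_mem [Nonempty X] [DecidableEq X] {B E : Finset X} (hE : E.Nonempty) :
    pickPt B E ∈ E := by
  unfold pickPt
  split_ifs with h
  · exact (Finset.mem_sdiff.mp h.choose_spec).1
  · exact hE.choose_spec

lemma pickPt_not_mem [Nonempty X] [DecidableEq X] {B E : Finset X} (h : ¬ E ⊆ B) :
    pickPt B E ∉ B := by
  have hne : (E \ B).Nonempty := by
    rcases Finset.not_subset.mp h with ⟨x, hx, hxB⟩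
    exact ⟨x, Finset.mem_sdiff.mpr ⟨hx, hxB⟩⟩
  unfold pickPt
  rw [dif_pos hne]
  exact (Finset.mem_sdiff.mp hne.choose_spec).2

/-- The probability distribution attaining `bel m B`. -/
noncomputable def pDist [Fintype X] [Nonempty X] [DecidableEq X]
    (m : Finset X → ℝ) (B : Finset X) (x : X) : ℝ :=
  ∑ E ∈ Finset.univ.filter (fun E => pickPt B E = x), m E

lemma pDist_sum [Fintype X] [Nonempty X] [DecidableEq X]
    (m : Finset X → ℝ) (B A : Finset X) :
    ∑ x ∈ A, pDist m B x = ∑ E ∈ Finset.univ.filter (fun E => pickPt B E ∈ A), m E := by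
  simpa [pDist] using Finset.sum_fiberwise_eq_sum_filter Finset.univ A (fun E => pickPt B E) m

lemma bel_eq_sum_nonempty [Fintype X] [DecidableEq X]
    (m : Finset X → ℝ) (hm : IsMass m) (A : Finset X) :
    bel m A = ∑ E ∈ Finset.univ.filter (fun E => E ⊆ A ∧ E.Nonempty), m E := by
  unfold bel
  refine (Finset.sum_subset ?_ ?_).symm
  · intro E hE
    simp only [Finset.mem_filter] at hE ⊢
    exact ⟨hE.1, hE.2.1⟩
  · intro E hE hE'
    simp only [Finset.mem_filter, not_and] at hE hE'
    have : E = ∅ := by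
      by_contra hne
      exact (hE' hE.1 hE.2) (Finset.nonempty_iff_ne_empty.mpr hne)
    rw [this, hm.2.1]

lemma pDist_mem [Fintype X] [Nonempty X] [DecidableEq X]
    (m : Finset X → ℝ) (hm : IsMass m) (B : Finset X) :
    pDist m B ∈ credalBel m := by
  refine ⟨⟨fun x => Finset.sum_nonneg fun E _ => hm.1 E, ?_⟩, ?_⟩
  · have := pDist_sum m B Finset.univ
    simpa [Finset.filter_true_of_mem, hm.2.2] using this
  · intro A
    rw [pDist_sum m B A, bel_eq_sum_nonempty m hm A]
    refine Finset.sum_le_sum_of_subset_of_nonneg ?_ (fun E _ _ => hm.1 E)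
    intro E hE
    simp only [Finset.mem_filter] at hE ⊢
    exact ⟨hE.1, hE.2.1 (pickPt_mem hE.2.2)⟩

lemma pDist_eq_bel [Fintype X] [Nonempty X] [DecidableEq X]
    (m : Finset X → ℝ) (hm : IsMass m) (B : Finset X) :
    ∑ x ∈ B, pDist m B x = bel m B := by
  have hle : ∑ x ∈ B, pDist m B x ≤ bel m B := by
    rw [pDist_sum m B B]
    unfold bel
    have key : Finset.univ.filter (fun E : Finset X => pickPt B E ∈ B)
        ⊆ Finset.univ.filter (fun E : Finset X => E ⊆ B ∨ E = ∅) := by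
      intro E hE
      simp only [Finset.mem_filter] at hE ⊢
      refine ⟨Finset.mem_univ E, ?_⟩
      by_contra hc
      push_neg at hc
      exact pickPt_not_mem hc.1 hE.2
    calc ∑ E ∈ Finset.univ.filter (fun E => pickPt B E ∈ B), m E
        ≤ ∑ E ∈ Finset.univ.filter (fun E : Finset X => E ⊆ B ∨ E = ∅), m E :=
          Finset.sum_le_sum_of_subset_of_nonneg key (fun E _ _ => hm.1 E)
      _ = ∑ E ∈ Finset.univ.filter (fun E : Finset X => E ⊆ B), m E := by
          apply Finset.sum_congr ?_ (fun _ _ => rfl)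
          apply Finset.filter_congr
          intro E _
          simp only [or_iff_left_iff_imp]
          rintro rfl
          exact Finset.empty_subset B
  have hge := (pDist_mem m hm B).2 B
  linarith

theorem statement16 [Fintype X] [Nonempty X] [DecidableEq X]
    (m : Finset X → ℝ) (hm : IsMass m) :
    (credalBel m).Nonempty ∧
      ∀ B : Finset X,
        IsLeast ((fun p : X → ℝ => ∑ x ∈ B, p x) '' credalBel m) (bel m B) := by
  constructor
  · exact ⟨pDist m ∅, pDist_mem m hm ∅⟩
  · intro B
    constructor
    · exact ⟨pDist m B, pDist_mem m hm B, pDist_eq_bel m hm B⟩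
    · rintro s ⟨p, hp, rfl⟩
      exact hp.2 B
end
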